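/- arXiv:2512.00697 — 4 statements merged into one kernel-verified Lean document; each statement's English description precedes it below -/
import Mathlib

section
/- Given any constants C, D and integer d ≥ 1 there exist constants E = E(C,D,d) and F = F(C,D,d) such that the following holds. Let K be a field and let f_1,...,f_s ∈ K[x_1,...,x_n] be homogeneous polynomials of positive degrees at most d, and let r ≥ 0. Then there exists a (C,D,r)-strong tower 𝔽 of degree (1,2,...,d) with total number of forms s_1+...+s_h ≤ E·(s+r)^F such that the ideal (f_1,...,f_s) is contained in the ideal generated by 𝔽. Moreover, if all the f_i have odd degrees, then 𝔽 can be chosen to consist only of forms of odd degree. -/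
open MvPolynomial

/-- `StrLE I d f r` : the form `f` (of degree `d`) has strength at most `r` relative to the
homogeneous ideal `I`, i.e. `f ≡ g₁h₁+...+g_rh_r mod I` with the `gᵢ, hᵢ` forms of
strictly lower positive degree. -/
def StrLE {K : Type u} {σ : Type v} [CommRing K] (I : Ideal (MvPolynomial σ K)) (d : ℕ)
    (f : MvPolynomial σ K) (r : ℕ) : Prop :=
  ∃ g h : Fin r → MvPolynomial σ K,
    (∀ t, ∃ a, 0 < a ∧ a < d ∧ (g t).IsHomogeneous a) ∧
    (∀ t, ∃ b, 0 < b ∧ b < d ∧ (h t).IsHomogeneous b) ∧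
    f - ∑ t, g t * h t ∈ I

/-- The relative strength of a degree-`d` form `f` modulo the ideal `I`, as an
extended natural number (`⊤` if no decomposition exists, e.g. for linear forms). -/
noncomputable def relStrength {K : Type u} {σ : Type v} [CommRing K]
    (I : Ideal (MvPolynomial σ K)) (d : ℕ) (f : MvPolynomial σ K) : ℕ∞ :=
  ⨅ r : {r : ℕ // StrLE I d f r}, (r.1 : ℕ∞)

/-- The collective relative strength of the forms `f 0, ..., f (s-1)` (all of degree `d`)
modulo the ideal `I`: the minimum over nonzero coefficient tuples of the relative strength
of the corresponding linear combination. -/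
noncomputable def relStrengthFam {K : Type u} {σ : Type v} [CommRing K]
    (I : Ideal (MvPolynomial σ K)) (d s : ℕ) (f : ℕ → MvPolynomial σ K) : ℕ∞ :=
  ⨅ a : {a : ℕ → K // ∃ j < s, a j ≠ 0},
    relStrength I d (∑ j ∈ Finset.range s, MvPolynomial.C (a.1 j) * f j)

/-- A tower of forms: `h` layers; layer `i < h` consists of the forms
`form i j` for `j < size i`, all of degree `deg i`. -/
structure Tower (K : Type u) [CommRing K] (σ : Type v) where
  h : ℕ
  deg : ℕ → ℕ
  size : ℕ → ℕ
  form : ℕ → ℕ → MvPolynomial σ K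

namespace Tower

variable {K : Type u} {L : Type w} {σ : Type v} [CommRing K]

/-- All forms of the tower are homogeneous of the degree of their layer. -/
def IsHomog (F : Tower K σ) : Prop :=
  ∀ i < F.h, ∀ j < F.size i, (F.form i j).IsHomogeneous (F.deg i)

/-- The ideal generated by the layers below layer `i`. -/
noncomputable def lowerIdeal (F : Tower K σ) (i : ℕ) : Ideal (MvPolynomial σ K) :=
  Ideal.span {p | ∃ i' < i, ∃ j < F.size i', p = F.form i' j}

/-- The ideal generated by all forms of the tower. -/
noncomputable def idealOfAll (F : Tower K σ) : Ideal (MvPolynomial σ K) := F.lowerIdeal F.h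

/-- `s_i + s_{i+1} + ... + s_h`. -/
def tailSize (F : Tower K σ) (i : ℕ) : ℕ := ∑ i' ∈ Finset.Ico i F.h, F.size i'

/-- The total number of forms in the tower. -/
def totalSize (F : Tower K σ) : ℕ := F.tailSize 0

/-- The tower is `(A,B,r)`-strong relative to an ambient ideal `J`: for each layer `i`,
the collective relative strength of layer `i` modulo `J` and the lower layers
exceeds `A(s_i+...+s_h+r)^B`. -/
def IsStrongOver (J : Ideal (MvPolynomial σ K)) (F : Tower K σ) (A B r : ℕ) : Prop :=
  ∀ i < F.h, ((A * (F.tailSize i + r) ^ B : ℕ) : ℕ∞) <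
    relStrengthFam (J ⊔ F.lowerIdeal i) (F.deg i) (F.size i) (F.form i)

/-- The tower is `(A,B,r)`-strong. -/
def IsStrong (F : Tower K σ) (A B r : ℕ) : Prop := F.IsStrongOver ⊥ A B r

/-- The tower obtained by applying a ring homomorphism to all coefficients. -/
noncomputable def map [CommRing L] (φ : K →+* L) (F : Tower K σ) : Tower L σ where
  h := F.h
  deg := F.deg
  size := F.size
  form := fun i j => MvPolynomial.map φ (F.form i j)

/-- The tower is absolutely `(A,B,r)`-strong: it is `(A,B,r)`-strong after extending
scalars to an algebraic closure. -/
def AbsStrong {K : Type u} [Field K] (F : Tower K σ) (A B r : ℕ) : Prop :=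
  (F.map (algebraMap K (AlgebraicClosure K))).IsStrong A B r

/-- The tower obtained by placing the layers of `G` above those of `F`. -/
def append (F G : Tower K σ) : Tower K σ where
  h := F.h + G.h
  deg := fun i => if i < F.h then F.deg i else G.deg (i - F.h)
  size := fun i => if i < F.h then F.size i else G.size (i - F.h)
  form := fun i => if i < F.h then F.form i else G.form (i - F.h)

/-- The common zero locus of all forms of the tower. -/
def zeroSet (F : Tower K σ) : Set (σ → K) :=
  {x | ∀ i < F.h, ∀ j < F.size i, MvPolynomial.eval x (F.form i j) = 0}

/-- The `K`-rational points of `Z(F)` are Zariski dense in `Z(F)` (taken over an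
algebraic closure of `K`): every polynomial vanishing on the image of the `K`-rational
zeros vanishes on all of `Z(F)`. -/
def KPointsDense {K : Type u} [Field K] (F : Tower K σ) : Prop :=
  ∀ p : MvPolynomial σ (AlgebraicClosure K),
    (∀ y ∈ F.zeroSet, MvPolynomial.eval (fun t => algebraMap K (AlgebraicClosure K) (y t)) p = 0) →
    ∀ x ∈ (F.map (algebraMap K (AlgebraicClosure K))).zeroSet, MvPolynomial.eval x p = 0

end Tower

/-- The codimension (height) of the Zariski-closed set cut out by an ideal: the infimum
of the heights of the primes containing it. -/
noncomputable def idealCodim {R : Type u} [CommRing R] (I : Ideal R) : ℕ∞ :=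
  ⨅ p : {p : PrimeSpectrum R // I ≤ p.asIdeal}, Order.height p.1

section Regularization

open MvPolynomial Finset

namespace Tower

variable {K : Type u} {σ : Type v} [CommRing K]

/-- `p` is one of the forms of the tower `T`. -/
def Mem (T : Tower K σ) (p : MvPolynomial σ K) : Prop :=
  ∃ i < T.h, ∃ j < T.size i, p = T.form i j

lemma idealOfAll_eq (T : Tower K σ) : T.idealOfAll = Ideal.span {p | T.Mem p} := rfl

lemma mem_idealOfAll {T : Tower K σ} {p : MvPolynomial σ K} (hp : T.Mem p) :
    p ∈ T.idealOfAll := by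
  rw [idealOfAll_eq]; exact Ideal.subset_span hp

lemma idealOfAll_le_of_mem {T T' : Tower K σ} (hTT' : ∀ p, T.Mem p → p ∈ T'.idealOfAll) :
    T.idealOfAll ≤ T'.idealOfAll := by
  rw [idealOfAll_eq]
  exact Ideal.span_le.2 hTT'

lemma lowerIdeal_le_idealOfAll {T : Tower K σ} {i : ℕ} (hi : i ≤ T.h) :
    T.lowerIdeal i ≤ T.idealOfAll := by
  apply Ideal.span_mono
  rintro p ⟨i', hi', hp⟩
  exact ⟨i', lt_of_lt_of_le hi' hi, hp⟩

/-- Add one form `p` at the top of layer `b`. -/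
def addForm (T : Tower K σ) (b : ℕ) (p : MvPolynomial σ K) : Tower K σ where
  h := T.h
  deg := T.deg
  size := Function.update T.size b (T.size b + 1)
  form := Function.update T.form b (Function.update (T.form b) (T.size b) p)

/-- Remove the `j`-th form of layer `i`, shifting later forms down. -/
def removeForm (T : Tower K σ) (i j : ℕ) : Tower K σ where
  h := T.h
  deg := T.deg
  size := Function.update T.size i (T.size i - 1)
  form := Function.update T.form i (fun j' => if j' < j then T.form i j' else T.form i (j' + 1))

/-- Add a list of forms (layer, form). -/
def addForms (T : Tower K σ) : List (ℕ × MvPolynomial σ K) → Tower K σ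
  | [] => T
  | q :: l => (T.addForm q.1 q.2).addForms l

@[simp] lemma h_addForm (T : Tower K σ) (b p) : (T.addForm b p).h = T.h := rfl
@[simp] lemma deg_addForm (T : Tower K σ) (b p) : (T.addForm b p).deg = T.deg := rfl
@[simp] lemma h_removeForm (T : Tower K σ) (i j) : (T.removeForm i j).h = T.h := rfl
@[simp] lemma deg_removeForm (T : Tower K σ) (i j) : (T.removeForm i j).deg = T.deg := rfl

lemma size_addForm (T : Tower K σ) (b p k) :
    (T.addForm b p).size k = if k = b then T.size b + 1 else T.size k :=
  Function.update_apply ..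

lemma size_removeForm (T : Tower K σ) (i j k) :
    (T.removeForm i j).size k = if k = i then T.size i - 1 else T.size k :=
  Function.update_apply ..

lemma form_addForm_of_lt (T : Tower K σ) (b p) {k j} (hj : j < T.size k) :
    (T.addForm b p).form k j = T.form k j := by
  show Function.update T.form b _ k j = _
  rcases eq_or_ne k b with rfl | hkb
  · rw [Function.update_self]
    exact Function.update_of_ne (by omega) _ _
  · rw [Function.update_of_ne hkb]

lemma form_addForm_self (T : Tower K σ) (b p) :
    (T.addForm b p).form b (T.size b) = p := by
  show Function.update T.form b _ b (T.size b) = _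
  rw [Function.update_self, Function.update_self]

@[simp] lemma h_addForms (T : Tower K σ) (l) : (T.addForms l).h = T.h := by
  induction l generalizing T with
  | nil => rfl
  | cons q l ih => simp [addForms, ih]

@[simp] lemma deg_addForms (T : Tower K σ) (l) : (T.addForms l).deg = T.deg := by
  induction l generalizing T with
  | nil => rfl
  | cons q l ih => simp [addForms, ih]

lemma mem_addForm (T : Tower K σ) (b p) {q} (hq : T.Mem q) : (T.addForm b p).Mem q := by
  obtain ⟨i, hi, j, hj, rfl⟩ := hq
  refine ⟨i, hi, j, ?_, (T.form_addForm_of_lt b p hj).symm⟩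
  rw [size_addForm]
  rcases eq_or_ne i b with rfl | hib
  · rw [if_pos rfl]; omega
  · rw [if_neg hib]; exact hj

lemma mem_addForm_self (T : Tower K σ) {b} (hb : b < T.h) (p) : (T.addForm b p).Mem p := by
  refine ⟨b, hb, T.size b, ?_, (T.form_addForm_self b p).symm⟩
  rw [size_addForm, if_pos rfl]
  omega

lemma mem_addForms (T : Tower K σ) (l) {q} (hq : T.Mem q) : (T.addForms l).Mem q := by
  induction l generalizing T with
  | nil => exact hq
  | cons q' l ih => exact ih _ (T.mem_addForm q'.1 q'.2 hq)

lemma mem_addForms_of_mem_list (T : Tower K σ) (l) {b p} (hbp : (b, p) ∈ l) (hb : b < T.h) :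
    (T.addForms l).Mem p := by
  induction l generalizing T with
  | nil => simp at hbp
  | cons q' l ih =>
    rcases List.mem_cons.1 hbp with h | h
    · exact mem_addForms _ l (h ▸ T.mem_addForm_self hb p)
    · exact ih _ h hb

lemma isHomog_addForm {T : Tower K σ} (hT : T.IsHomog) {b p} (hp : p.IsHomogeneous (T.deg b)) :
    (T.addForm b p).IsHomog := by
  intro i hi j hj
  rw [size_addForm] at hj
  show (Function.update T.form b _ i j).IsHomogeneous ((T.addForm b p).deg i)
  rcases eq_or_ne i b with rfl | hib
  · rw [if_pos rfl] at hj
    rw [Function.update_self, Function.update_apply]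
    rcases eq_or_ne j (T.size i) with rfl | hjs
    · rw [if_pos rfl]; exact hp
    · rw [if_neg hjs]
      exact hT i hi j (by omega)
  · rw [Function.update_of_ne hib]
    exact hT i hi j (by rwa [if_neg hib] at hj)

lemma isHomog_removeForm {T : Tower K σ} (hT : T.IsHomog) (i j) : (T.removeForm i j).IsHomog := by
  intro k hk j' hj'
  rw [size_removeForm] at hj'
  show (Function.update T.form i _ k j').IsHomogeneous ((T.removeForm i j).deg k)
  rcases eq_or_ne k i with rfl | hki
  · rw [if_pos rfl] at hj'
    rw [Function.update_self]
    split
    · exact hT k hk j' (by omega)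
    · exact hT k hk (j' + 1) (by omega)
  · rw [Function.update_of_ne hki]
    exact hT k hk j' (by rwa [if_neg hki] at hj')

lemma isHomog_addForms {T : Tower K σ} (hT : T.IsHomog) {l}
    (hl : ∀ q ∈ l, (Prod.snd q).IsHomogeneous (T.deg q.1)) : (T.addForms l).IsHomog := by
  induction l generalizing T with
  | nil => exact hT
  | cons q l ih =>
    refine ih (T := T.addForm q.1 q.2) (isHomog_addForm hT (hl q (by simp))) ?_
    intro q' hq'
    rw [deg_addForm]
    exact hl q' (by simp [hq'])

lemma mem_removeForm_of_ne {T : Tower K σ} {i j : ℕ} (hj : j < T.size i) {i' j' : ℕ}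
    (hi' : i' < T.h) (hj' : j' < T.size i') (hne : i' ≠ i ∨ j' ≠ j) :
    (T.removeForm i j).Mem (T.form i' j') := by
  rcases eq_or_ne i' i with rfl | hii
  · have hne' : j' ≠ j := hne.resolve_left (by simp)
    rcases lt_or_gt_of_ne hne' with h | h
    · refine ⟨i', hi', j', ?_, ?_⟩
      · rw [size_removeForm, if_pos rfl]; omega
      · show _ = Function.update T.form i' _ i' j'
        rw [Function.update_self, if_pos h]
    · refine ⟨i', hi', j' - 1, ?_, ?_⟩
      · rw [size_removeForm, if_pos rfl]; omega
      · show _ = Function.update T.form i' _ i' (j' - 1)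
        rw [Function.update_self, if_neg (by omega)]
        congr 1
        omega
  · refine ⟨i', hi', j', ?_, ?_⟩
    · rw [size_removeForm, if_neg hii]; exact hj'
    · show _ = Function.update T.form i _ i' j'
      rw [Function.update_of_ne hii]

/-- Weighted size of a tower. -/
def phi (v : ℕ → ℕ) (T : Tower K σ) : ℕ := ∑ k ∈ Finset.range T.h, T.size k * v k

lemma phi_addForm (v : ℕ → ℕ) (T : Tower K σ) {b} (hb : b < T.h) (p) :
    phi v (T.addForm b p) = phi v T + v b := by
  unfold phi
  rw [h_addForm, ← Finset.sum_erase_add _ _ (Finset.mem_range.2 hb),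
    ← Finset.sum_erase_add _ (fun k => T.size k * v k) (Finset.mem_range.2 hb)]
  have : ∀ k ∈ (Finset.range T.h).erase b, (T.addForm b p).size k * v k = T.size k * v k := by
    intro k hk
    rw [size_addForm, if_neg (Finset.ne_of_mem_erase hk)]
  rw [Finset.sum_congr rfl this, size_addForm, if_pos rfl]
  ring

lemma phi_removeForm (v : ℕ → ℕ) (T : Tower K σ) {i} (hi : i < T.h) {j} (hj : j < T.size i) :
    phi v (T.removeForm i j) + v i = phi v T := by
  unfold phi
  rw [h_removeForm, ← Finset.sum_erase_add _ _ (Finset.mem_range.2 hi),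
    ← Finset.sum_erase_add _ (fun k => T.size k * v k) (Finset.mem_range.2 hi)]
  have : ∀ k ∈ (Finset.range T.h).erase i, (T.removeForm i j).size k * v k = T.size k * v k := by
    intro k hk
    rw [size_removeForm, if_neg (Finset.ne_of_mem_erase hk)]
  rw [Finset.sum_congr rfl this, size_removeForm, if_pos rfl]
  have : (T.size i - 1) * v i + v i = T.size i * v i := by
    have : T.size i - 1 + 1 = T.size i := by omega
    calc (T.size i - 1) * v i + v i = (T.size i - 1 + 1) * v i := by ring
    _ = T.size i * v i := by rw [this]
  omega

lemma phi_addForms (v : ℕ → ℕ) (T : Tower K σ) {l} (hl : ∀ q ∈ l, Prod.fst q < T.h) :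
    phi v (T.addForms l) = phi v T + (l.map (fun q => v q.1)).sum := by
  induction l generalizing T with
  | nil => simp [addForms]
  | cons q l ih =>
    have h1 : ∀ q' ∈ l, Prod.fst q' < (T.addForm q.1 q.2).h := by
      intro q' hq'
      rw [h_addForm]
      exact hl q' (List.mem_cons_of_mem _ hq')
    rw [addForms, ih _ h1, phi_addForm v T (hl q List.mem_cons_self) q.2,
      List.map_cons, List.sum_cons]
    ring

lemma tailSize_mul_le_phi {v : ℕ → ℕ} (hv : Monotone v) (T : Tower K σ) (i : ℕ) :
    T.tailSize i * v i ≤ phi v T := by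
  unfold tailSize phi
  rw [Finset.sum_mul]
  calc ∑ k ∈ Finset.Ico i T.h, T.size k * v i
      ≤ ∑ k ∈ Finset.Ico i T.h, T.size k * v k := by
        refine Finset.sum_le_sum fun k hk => ?_
        exact Nat.mul_le_mul_left _ (hv (Finset.mem_Ico.1 hk).1)
    _ ≤ ∑ k ∈ Finset.range T.h, T.size k * v k := by
        refine Finset.sum_le_sum_of_subset fun k hk => ?_
        rw [Finset.mem_range]
        exact (Finset.mem_Ico.1 hk).2

lemma totalSize_le_phi {v : ℕ → ℕ} (hv : ∀ k, 0 < v k) (T : Tower K σ) :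
    T.totalSize ≤ phi v T := by
  unfold totalSize tailSize phi
  rw [Finset.range_eq_Ico]
  exact Finset.sum_le_sum fun k _ => Nat.le_mul_of_pos_right _ (hv k)

lemma size_addForms_of_notin (T : Tower K σ) {l} {k : ℕ} (hk : ∀ q ∈ l, Prod.fst q ≠ k) :
    (T.addForms l).size k = T.size k := by
  induction l generalizing T with
  | nil => rfl
  | cons q l ih =>
    rw [addForms, ih _ (fun q' hq' => hk q' (by simp [hq']))]
    show Function.update T.size q.1 _ k = _
    rw [Function.update_of_ne (fun h => hk q (by simp) h.symm)]

lemma size_removeForm_le (T : Tower K σ) (i j k : ℕ) :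
    (T.removeForm i j).size k ≤ T.size k := by
  rw [size_removeForm]
  rcases eq_or_ne k i with rfl | h
  · rw [if_pos rfl]; omega
  · rw [if_neg h]

end Tower

end Regularization
section Extraction

open MvPolynomial Finset

variable {K : Type u} {σ : Type v} [CommRing K]

lemma exists_of_relStrength_le {I : Ideal (MvPolynomial σ K)} {d : ℕ}
    {f : MvPolynomial σ K} {ρ : ℕ} (h : relStrength I d f ≤ (ρ : ℕ∞)) :
    ∃ r' ≤ ρ, StrLE I d f r' := by
  by_contra hc
  push_neg at hc
  have : ((ρ : ℕ∞) + 1) ≤ relStrength I d f := by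
    refine le_iInf fun rr => ?_
    have : ρ < rr.1 := by
      by_contra hle
      exact hc rr.1 (by omega) rr.2
    calc (ρ : ℕ∞) + 1 = ((ρ + 1 : ℕ) : ℕ∞) := by push_cast; ring
    _ ≤ (rr.1 : ℕ∞) := by exact_mod_cast this
  have h2 : (ρ : ℕ∞) < (ρ : ℕ∞) + 1 := by
    calc (ρ : ℕ∞) < ((ρ + 1 : ℕ) : ℕ∞) := by exact_mod_cast Nat.lt_succ_self ρ
    _ = (ρ : ℕ∞) + 1 := by push_cast; ring
  exact absurd (le_trans this h) (not_le.2 h2)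

lemma exists_of_relStrengthFam_le {I : Ideal (MvPolynomial σ K)} {d s : ℕ}
    {f : ℕ → MvPolynomial σ K} {ρ : ℕ} (h : relStrengthFam I d s f ≤ (ρ : ℕ∞)) :
    ∃ a : ℕ → K, (∃ j < s, a j ≠ 0) ∧
      ∃ r' ≤ ρ, StrLE I d (∑ j ∈ Finset.range s, MvPolynomial.C (a j) * f j) r' := by
  by_contra hc
  push_neg at hc
  have : ((ρ : ℕ∞) + 1) ≤ relStrengthFam I d s f := by
    refine le_iInf fun a => ?_
    refine le_iInf fun rr => ?_
    have : ρ < rr.1 := by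
      by_contra hle
      exact hc a.1 a.2 rr.1 (by omega) rr.2
    calc (ρ : ℕ∞) + 1 = ((ρ + 1 : ℕ) : ℕ∞) := by push_cast; ring
    _ ≤ (rr.1 : ℕ∞) := by exact_mod_cast this
  have h2 : (ρ : ℕ∞) < (ρ : ℕ∞) + 1 := by
    calc (ρ : ℕ∞) < ((ρ + 1 : ℕ) : ℕ∞) := by exact_mod_cast Nat.lt_succ_self ρ
    _ = (ρ : ℕ∞) + 1 := by push_cast; ring
  exact absurd (le_trans this h) (not_le.2 h2)

/-- In a span of homogeneous polynomials, homogeneous components of members stay inside. -/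
lemma homogeneousComponent_mem_span {S : Set (MvPolynomial σ K)}
    (hS : ∀ p ∈ S, ∃ m, p.IsHomogeneous m) {q : MvPolynomial σ K}
    (hq : q ∈ Ideal.span S) (n : ℕ) :
    (homogeneousComponent n q : MvPolynomial σ K) ∈ Ideal.span S := by
  letI := MvPolynomial.gradedAlgebra (σ := σ) (R := K)
  have hhom : (Ideal.span S).IsHomogeneous (homogeneousSubmodule σ K) :=
    Ideal.homogeneous_span _ S fun x hx => by
      obtain ⟨m, hm⟩ := hS x hx
      exact ⟨m, (mem_homogeneousSubmodule _ _).2 hm⟩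
  have h2 := hhom n hq
  have h3 : ((DirectSum.decompose (homogeneousSubmodule σ K) q n : homogeneousSubmodule σ K n) :
      MvPolynomial σ K) = homogeneousComponent n q := by
    exact MvPolynomial.weightedDecomposition.decompose'_apply K (1 : σ → ℕ) q n
  rwa [h3] at h2

end Extraction
section MainInduction

open MvPolynomial Finset

variable {K : Type u} {σ : Type v} [Field K]

lemma tower_regularize (C D d r : ℕ) (v : ℕ → ℕ) (hv1 : ∀ k, 0 < v k) (hvm : Monotone v)
    (P : ℕ)
    (hkey : ∀ i < d, ∀ t : ℕ, t * v i ≤ P →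
      C * (t + r) ^ D * (if i = 0 then 0 else v (i - 1)) + 1 ≤ v i)
    (oddOnly : Bool) :
    ∀ N : ℕ, ∀ T : Tower K σ, T.h = d → T.deg = (fun k => k + 1) → T.IsHomog →
      Tower.phi v T ≤ P → Tower.phi v T ≤ N →
      (oddOnly = true → ∀ k < d, Even (k + 1) → T.size k = 0) →
      ∃ T' : Tower K σ, T'.h = d ∧ T'.deg = (fun k => k + 1) ∧ T'.IsHomog ∧
        T'.IsStrong C D r ∧ Tower.phi v T' ≤ Tower.phi v T ∧
        T.idealOfAll ≤ T'.idealOfAll ∧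
        (oddOnly = true → ∀ k < d, Even (k + 1) → T'.size k = 0) := by
  intro N
  induction N using Nat.strong_induction_on with
  | _ N IH =>
  intro T hh hdeg hhomog hP hN hodd
  by_cases hstrong : T.IsStrong C D r
  · exact ⟨T, hh, hdeg, hhomog, hstrong, le_refl _, le_refl _, hodd⟩
  -- extract a weak layer
  unfold Tower.IsStrong Tower.IsStrongOver at hstrong
  push_neg at hstrong
  obtain ⟨i, hiT, hile⟩ := hstrong
  have hid : i < d := hh ▸ hiT
  simp only [hdeg] at hile
  set ρ := C * (T.tailSize i + r) ^ D with hρ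
  obtain ⟨a, ⟨j, hjs, haj⟩, r', hr'ρ, gg, hfun, hg, hhf, hw⟩ := exists_of_relStrengthFam_le hile
  rw [bot_sup_eq] at hw
  set combo := ∑ j' ∈ Finset.range (T.size i), MvPolynomial.C (a j') * T.form i j' with hcombo
  -- choose, for each summand, which factor (if any) to keep
  have hpick : ∀ t : Fin r', ∃ o : Option (ℕ × MvPolynomial σ K),
      (∀ b p, o = some (b, p) → b < i ∧ p.IsHomogeneous (b + 1) ∧
        (oddOnly = true → Odd (b + 1)) ∧ gg t * hfun t ∈ Ideal.span {p}) ∧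
      (o = none → oddOnly = true ∧ ∃ m, Even m ∧ (gg t * hfun t).IsHomogeneous m) := by
    intro t
    obtain ⟨ag, hag0, haglt, hagh⟩ := hg t
    obtain ⟨bh, hbh0, hbhlt, hbhh⟩ := hhf t
    by_cases hoag : Odd ag
    · refine ⟨some (ag - 1, gg t), ?_, by simp⟩
      intro b p hbp
      simp only [Option.some.injEq, Prod.mk.injEq] at hbp
      obtain ⟨rfl, rfl⟩ := hbp
      have he : ag - 1 + 1 = ag := by omega
      refine ⟨by omega, he ▸ hagh, fun _ => he ▸ hoag, ?_⟩
      exact Ideal.mul_mem_right _ _ (Ideal.subset_span (Set.mem_singleton _))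
    · by_cases hobh : Odd bh
      · refine ⟨some (bh - 1, hfun t), ?_, by simp⟩
        intro b p hbp
        simp only [Option.some.injEq, Prod.mk.injEq] at hbp
        obtain ⟨rfl, rfl⟩ := hbp
        have he : bh - 1 + 1 = bh := by omega
        refine ⟨by omega, he ▸ hbhh, fun _ => he ▸ hobh, ?_⟩
        rw [mul_comm]
        exact Ideal.mul_mem_right _ _ (Ideal.subset_span (Set.mem_singleton _))
      · by_cases hOO : oddOnly = true
        · refine ⟨none, by simp, fun _ => ⟨hOO, ag + bh, ?_, hagh.mul hbhh⟩⟩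
          exact (Nat.not_odd_iff_even.1 hoag).add (Nat.not_odd_iff_even.1 hobh)
        · refine ⟨some (ag - 1, gg t), ?_, by simp⟩
          intro b p hbp
          simp only [Option.some.injEq, Prod.mk.injEq] at hbp
          obtain ⟨rfl, rfl⟩ := hbp
          have he : ag - 1 + 1 = ag := by omega
          refine ⟨by omega, he ▸ hagh, fun hfl => absurd hfl hOO, ?_⟩
          exact Ideal.mul_mem_right _ _ (Ideal.subset_span (Set.mem_singleton _))
  choose pick hsome hnone using hpick
  set l := (List.ofFn pick).reduceOption with hl
  have hl_mem : ∀ q ∈ l, ∃ t : Fin r', pick t = some q := by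
    intro q hq
    rw [hl, List.reduceOption_mem_iff, List.mem_ofFn] at hq
    exact hq
  have hl_mem' : ∀ t : Fin r', ∀ q, pick t = some q → q ∈ l := by
    intro t q hq
    rw [hl, List.reduceOption_mem_iff, List.mem_ofFn]
    exact ⟨t, hq⟩
  have hb_lt : ∀ q ∈ l, Prod.fst q < i := by
    intro q hq
    obtain ⟨t, ht⟩ := hl_mem q hq
    exact (hsome t q.1 q.2 (by rw [ht])).1
  set T1 := T.removeForm i j with hT1
  set T' := T1.addForms l with hT'def
  have hT'h : T'.h = d := by rw [hT'def, Tower.h_addForms, hT1, Tower.h_removeForm, hh]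
  have hT'deg : T'.deg = fun k => k + 1 := by
    rw [hT'def, Tower.deg_addForms, hT1, Tower.deg_removeForm, hdeg]
  have hT'homog : T'.IsHomog := by
    refine Tower.isHomog_addForms (Tower.isHomog_removeForm hhomog i j) ?_
    intro q hq
    obtain ⟨t, ht⟩ := hl_mem q hq
    have := (hsome t q.1 q.2 (by rw [ht])).2.1
    simp only [Tower.deg_removeForm, hdeg]
    exact this
  -- membership of the old tower's ideal in the new tower's ideal
  have hiTh : i < T.h := hiT
  have hlower : T.lowerIdeal i ≤ T'.idealOfAll := by
    refine Ideal.span_le.2 ?_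
    rintro p ⟨i', hi', j'', hj'', rfl⟩
    refine Tower.mem_idealOfAll (Tower.mem_addForms _ l ?_)
    exact Tower.mem_removeForm_of_ne hjs (lt_trans hi' hiTh) hj'' (Or.inl (ne_of_lt hi'))
  have hcombo_homog : combo ∈ homogeneousSubmodule σ K (i + 1) := by
    rw [hcombo]
    refine Submodule.sum_mem _ fun j' hj' => ?_
    rw [MvPolynomial.C_mul']
    refine Submodule.smul_mem _ _ ((mem_homogeneousSubmodule _ _).2 ?_)
    have := hhomog i hiTh j' (Finset.mem_range.1 hj')
    rwa [hdeg] at this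
  set picked := Finset.univ.filter (fun t : Fin r' => (pick t).isSome) with hpicked
  have hS_picked : ∑ t ∈ picked, gg t * hfun t ∈ T'.idealOfAll := by
    refine Submodule.sum_mem _ fun t ht => ?_
    rw [hpicked, Finset.mem_filter] at ht
    obtain ⟨⟨b, p⟩, hbp⟩ := Option.isSome_iff_exists.1 ht.2
    obtain ⟨hb, hphom, hoddb, hspan⟩ := hsome t b p hbp
    have hpmem : p ∈ T'.idealOfAll := by
      refine Tower.mem_idealOfAll (Tower.mem_addForms_of_mem_list _ l (hl_mem' t (b, p) hbp) ?_)
      rw [hT1, Tower.h_removeForm, hh]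
      exact lt_trans hb hid
    exact (Ideal.span_singleton_le_iff_mem _).2 hpmem hspan
  have hw' : combo - ∑ t : Fin r', gg t * hfun t ∈ T'.idealOfAll := hlower hw
  have hcomboB : combo - (∑ t ∈ Finset.univ.filter (fun t : Fin r' => ¬(pick t).isSome),
      gg t * hfun t) ∈ T'.idealOfAll := by
    have hsplit : (∑ t ∈ picked, gg t * hfun t) +
        (∑ t ∈ Finset.univ.filter (fun t : Fin r' => ¬(pick t).isSome), gg t * hfun t) =
        ∑ t : Fin r', gg t * hfun t := by
      rw [hpicked]
      exact Finset.sum_filter_add_sum_filter_not _ _ _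
    have heq : combo - (∑ t ∈ Finset.univ.filter (fun t : Fin r' => ¬(pick t).isSome),
        gg t * hfun t) = (combo - ∑ t : Fin r', gg t * hfun t) +
        ∑ t ∈ picked, gg t * hfun t := by
      rw [← hsplit]; ring
    rw [heq]
    exact Submodule.add_mem _ hw' hS_picked
  have hcombomem : combo ∈ T'.idealOfAll := by
    have hset : ∀ p ∈ {p | T'.Mem p}, ∃ m, MvPolynomial.IsHomogeneous p m := by
      rintro p ⟨i', hi', j'', hj'', rfl⟩
      exact ⟨T'.deg i', hT'homog i' hi' j'' hj''⟩
    have h1 : homogeneousComponent (i + 1) (combo -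
        (∑ t ∈ Finset.univ.filter (fun t : Fin r' => ¬(pick t).isSome), gg t * hfun t)) ∈
        T'.idealOfAll := by
      rw [Tower.idealOfAll_eq] at hcomboB ⊢
      exact homogeneousComponent_mem_span hset hcomboB (i + 1)
    have hBzero : homogeneousComponent (i + 1)
        (∑ t ∈ Finset.univ.filter (fun t : Fin r' => ¬(pick t).isSome), gg t * hfun t) = 0 := by
      rw [map_sum]
      refine Finset.sum_eq_zero fun t ht => ?_
      rw [Finset.mem_filter] at ht
      obtain ⟨hOO, m, hme, hmh⟩ := hnone t (Option.not_isSome_iff_eq_none.1 ht.2)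
      have hodd1 : ¬ Even (i + 1) := by
        intro he
        have := hodd hOO i hid he
        omega
      rw [homogeneousComponent_of_mem ((mem_homogeneousSubmodule _ _).2 hmh),
        if_neg (fun hc : i + 1 = m => hodd1 (hc ▸ hme))]
    have hKeep : homogeneousComponent (i + 1) combo = combo := by
      rw [homogeneousComponent_of_mem hcombo_homog, if_pos rfl]
    rw [map_sub, hBzero, hKeep, sub_zero] at h1
    exact h1
  have hTT' : T.idealOfAll ≤ T'.idealOfAll := by
    refine Tower.idealOfAll_le_of_mem ?_
    rintro p ⟨i', hi', j'', hj'', rfl⟩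
    by_cases hcase : i' = i ∧ j'' = j
    · obtain ⟨rfl, rfl⟩ := hcase
      have h5 : (∑ j' ∈ (Finset.range (T.size i')).erase j'',
          MvPolynomial.C (a j') * T.form i' j') + MvPolynomial.C (a j'') * T.form i' j'' =
          combo :=
        Finset.sum_erase_add _ _ (Finset.mem_range.2 hjs)
      have hsummem : (∑ j' ∈ (Finset.range (T.size i')).erase j'',
          MvPolynomial.C (a j') * T.form i' j') ∈ T'.idealOfAll := by
        refine Submodule.sum_mem _ fun j' hj' => ?_
        have hj'r := Finset.mem_of_mem_erase hj'
        rw [Finset.mem_range] at hj'r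
        refine Ideal.mul_mem_left _ _ (Tower.mem_idealOfAll (Tower.mem_addForms _ l ?_))
        exact Tower.mem_removeForm_of_ne hjs hiTh hj'r (Or.inr (Finset.ne_of_mem_erase hj'))
      have h6 : MvPolynomial.C (a j'') * T.form i' j'' ∈ T'.idealOfAll := by
        have : MvPolynomial.C (a j'') * T.form i' j'' = combo -
            (∑ j' ∈ (Finset.range (T.size i')).erase j'',
              MvPolynomial.C (a j') * T.form i' j') := eq_sub_of_add_eq' h5
        rw [this]
        exact Submodule.sub_mem _ hcombomem hsummem
      have h7 : T.form i' j'' =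
          MvPolynomial.C (a j'')⁻¹ * (MvPolynomial.C (a j'') * T.form i' j'') := by
        rw [← mul_assoc, ← MvPolynomial.C_mul, inv_mul_cancel₀ haj, MvPolynomial.C_1, one_mul]
      rw [h7]
      exact Ideal.mul_mem_left _ _ h6
    · have hne : i' ≠ i ∨ j'' ≠ j := by tauto
      exact Tower.mem_idealOfAll (Tower.mem_addForms _ l
        (Tower.mem_removeForm_of_ne hjs hi' hj'' hne))
  -- potential decrease
  have hphiT1 : Tower.phi v T1 + v i = Tower.phi v T := Tower.phi_removeForm v T hiTh hjs
  have hphiT' : Tower.phi v T' = Tower.phi v T1 + (l.map (fun q => v q.1)).sum := by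
    refine Tower.phi_addForms v T1 fun q hq => ?_
    rw [hT1, Tower.h_removeForm, hh]
    exact lt_trans (hb_lt q hq) hid
  set V := (if i = 0 then 0 else v (i - 1)) with hV
  have hsum : (l.map (fun q => v q.1)).sum ≤ r' * V := by
    rcases Nat.eq_zero_or_pos i with rfl | hi0
    · have hr0 : r' = 0 := by
        by_contra hr0
        obtain ⟨ag, hag0, haglt, -⟩ := hg ⟨0, Nat.pos_of_ne_zero hr0⟩
        omega
      subst hr0
      have : l = [] := by
        rw [hl]
        have : List.ofFn pick = [] := by
          simp [List.ofFn]
        rw [this, List.reduceOption_nil]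
      rw [this]
      simp
    · have hVv : V = v (i - 1) := by rw [hV, if_neg (by omega)]
      have h8 : (l.map (fun q => v q.1)).sum ≤ (l.map (fun q => v q.1)).length • v (i - 1) := by
        refine List.sum_le_card_nsmul _ _ fun x hx => ?_
        rw [List.mem_map] at hx
        obtain ⟨q, hq, rfl⟩ := hx
        exact hvm (by have := hb_lt q hq; omega)
      rw [smul_eq_mul, List.length_map] at h8
      have h9 : l.length ≤ r' := by
        rw [hl]
        calc (List.ofFn pick).reduceOption.length ≤ (List.ofFn pick).length :=
              List.reduceOption_length_le _
        _ = r' := List.length_ofFn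
      calc (l.map (fun q => v q.1)).sum ≤ l.length * v (i - 1) := h8
        _ ≤ r' * v (i - 1) := Nat.mul_le_mul_right _ h9
        _ = r' * V := by rw [hVv]
  have htail : T.tailSize i * v i ≤ P := le_trans (Tower.tailSize_mul_le_phi hvm T i) hP
  have hkey' : ρ * V + 1 ≤ v i := hkey i hid _ htail
  have hphi_lt : Tower.phi v T' < Tower.phi v T := by
    have h10 : r' * V ≤ ρ * V := Nat.mul_le_mul_right _ hr'ρ
    calc Tower.phi v T' = Tower.phi v T1 + (l.map (fun q => v q.1)).sum := hphiT'
      _ ≤ Tower.phi v T1 + ρ * V := by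
          refine Nat.add_le_add_left (le_trans hsum h10) _
      _ < Tower.phi v T1 + v i := Nat.add_lt_add_left (Nat.lt_of_lt_of_le (Nat.lt_succ_self _) hkey') _
      _ = Tower.phi v T := hphiT1
  -- odd layers stay empty
  have hodd' : oddOnly = true → ∀ k < d, Even (k + 1) → T'.size k = 0 := by
    intro hOO k hkd hke
    have h11 : T'.size k = T1.size k := by
      refine Tower.size_addForms_of_notin _ fun q hq => ?_
      obtain ⟨t, ht⟩ := hl_mem q hq
      have := (hsome t q.1 q.2 (by rw [ht])).2.2.1 hOO
      intro hqk
      rw [hqk] at this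
      exact (Nat.not_odd_iff_even.2 hke) this
    have h12 : T1.size k ≤ T.size k := Tower.size_removeForm_le T i j k
    have h13 := hodd hOO k hkd hke
    omega
  -- apply the induction hypothesis
  obtain ⟨T'', hc1, hc2, hc3, hc4, hc5, hc6, hc7⟩ :=
    IH (Tower.phi v T') (lt_of_lt_of_le hphi_lt hN) T' hT'h hT'deg hT'homog
      (le_trans (le_of_lt hphi_lt) hP) (le_refl _) hodd'
  exact ⟨T'', hc1, hc2, hc3, hc4, le_trans hc5 (le_of_lt hphi_lt),
    le_trans hTT' hc6, hc7⟩

end MainInduction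
section Assembly

open MvPolynomial Finset

/-- The size-budget function `g`. -/
def ggFun (C D s r : ℕ) : ℕ → ℕ
  | 0 => 1
  | m + 1 => ggFun C D s r m * (C * (s * ggFun C D s r m + r) ^ D + 1)

/-- The layer-ratio function `γ`. -/
def gamFun (C D d s r k : ℕ) : ℕ := C * (s * ggFun C D s r (d - 1 - k) + r) ^ D + 1

/-- The layer weights `v`. -/
def vFun (C D d s r k : ℕ) : ℕ := ∏ m ∈ Finset.range (k + 1), gamFun C D d s r m

/-- The exponent budget. -/
def expoFun (D : ℕ) : ℕ → ℕ
  | 0 => 1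
  | m + 1 => (D + 1) * (expoFun D m + 1)

lemma ggFun_pos (C D s r m : ℕ) : 0 < ggFun C D s r m := by
  induction m with
  | zero => exact Nat.one_pos
  | succ m ih => exact Nat.mul_pos ih (by omega)

lemma gamFun_pos (C D d s r k : ℕ) : 0 < gamFun C D d s r k := by
  unfold gamFun; omega

lemma vFun_pos (C D d s r k : ℕ) : 0 < vFun C D d s r k :=
  Finset.prod_pos fun m _ => gamFun_pos C D d s r m

lemma vFun_succ (C D d s r k : ℕ) :
    vFun C D d s r (k + 1) = vFun C D d s r k * gamFun C D d s r (k + 1) :=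
  Finset.prod_range_succ _ _

lemma vFun_mono (C D d s r : ℕ) : Monotone (vFun C D d s r) := by
  refine monotone_nat_of_le_succ fun k => ?_
  rw [vFun_succ]
  exact Nat.le_mul_of_pos_right _ (gamFun_pos C D d s r (k + 1))

lemma prod_Ico_gamFun (C D d s r : ℕ) :
    ∀ m ≤ d, ∏ k ∈ Finset.Ico (d - m) d, gamFun C D d s r k = ggFun C D s r m := by
  intro m
  induction m with
  | zero => intro _; simp [ggFun]
  | succ m ih =>
    intro hmd
    have h1 : d - (m + 1) < d := by omega
    rw [Finset.prod_eq_prod_Ico_succ_bot h1]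
    have h2 : d - (m + 1) + 1 = d - m := by omega
    have h3 : d - 1 - (d - (m + 1)) = m := by omega
    rw [h2, ih (by omega)]
    show (C * (s * ggFun C D s r (d - 1 - (d - (m+1))) + r) ^ D + 1) * ggFun C D s r m = _
    rw [h3]
    show _ = ggFun C D s r m * (C * (s * ggFun C D s r m + r) ^ D + 1)
    ring

lemma vFun_top (C D d s r : ℕ) (hd : 1 ≤ d) :
    vFun C D d s r (d - 1) = ggFun C D s r d := by
  have h1 : d - 1 + 1 = d := by omega
  unfold vFun
  rw [h1, Finset.range_eq_Ico]
  have := prod_Ico_gamFun C D d s r d (le_refl d)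
  rwa [Nat.sub_self] at this

lemma vFun_split (C D d s r : ℕ) {i : ℕ} (hid : i < d) (hd : 1 ≤ d) :
    vFun C D d s r (d - 1) = vFun C D d s r i * ggFun C D s r (d - 1 - i) := by
  have h1 : d - 1 + 1 = d := by omega
  unfold vFun
  rw [h1, ← prod_Ico_gamFun C D d s r (d - 1 - i) (by omega)]
  have h2 : d - (d - 1 - i) = i + 1 := by omega
  rw [h2]
  exact (Finset.prod_range_mul_prod_Ico _ (by omega)).symm

lemma key_ineq (C D d s r : ℕ) (hd : 1 ≤ d) :
    ∀ i < d, ∀ t : ℕ, t * vFun C D d s r i ≤ s * vFun C D d s r (d - 1) →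
      C * (t + r) ^ D * (if i = 0 then 0 else vFun C D d s r (i - 1)) + 1 ≤
        vFun C D d s r i := by
  intro i hid t ht
  rcases Nat.eq_zero_or_pos i with rfl | hi0
  · rw [if_pos rfl]
    simp only [mul_zero, zero_add]; exact vFun_pos C D d s r 0
  rw [if_neg (by omega)]
  -- bound on t
  have htb : t ≤ s * ggFun C D s r (d - 1 - i) := by
    have h1 : s * vFun C D d s r (d - 1) =
        (s * ggFun C D s r (d - 1 - i)) * vFun C D d s r i := by
      rw [vFun_split C D d s r hid hd]; ring
    rw [h1] at ht
    exact Nat.le_of_mul_le_mul_right ht (vFun_pos C D d s r i)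
  have hg : C * (t + r) ^ D ≤ gamFun C D d s r i - 1 := by
    unfold gamFun
    have : (t + r) ^ D ≤ (s * ggFun C D s r (d - 1 - i) + r) ^ D :=
      Nat.pow_le_pow_left (by omega) D
    have := Nat.mul_le_mul_left C this
    omega
  have hvi : vFun C D d s r i = vFun C D d s r (i - 1) * gamFun C D d s r i := by
    have h2 : i - 1 + 1 = i := by omega
    rw [← h2, vFun_succ, h2]
  have hx : 1 ≤ vFun C D d s r (i - 1) := vFun_pos C D d s r (i - 1)
  have hga : 1 ≤ gamFun C D d s r i := gamFun_pos C D d s r i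
  calc C * (t + r) ^ D * vFun C D d s r (i - 1) + 1
      ≤ (gamFun C D d s r i - 1) * vFun C D d s r (i - 1) + 1 :=
        Nat.add_le_add_right (Nat.mul_le_mul_right _ hg) 1
    _ ≤ (gamFun C D d s r i - 1) * vFun C D d s r (i - 1) + vFun C D d s r (i - 1) :=
        Nat.add_le_add_left hx _
    _ = (gamFun C D d s r i - 1 + 1) * vFun C D d s r (i - 1) := by ring
    _ = gamFun C D d s r i * vFun C D d s r (i - 1) := by rw [Nat.sub_add_cancel hga]
    _ = vFun C D d s r i := (hvi.trans (mul_comm _ _)).symm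

lemma ggFun_le (C D s r : ℕ) : ∀ m, ggFun C D s r m ≤ ((C + 1) * (s + r + 1)) ^ expoFun D m := by
  intro m
  set X := (C + 1) * (s + r + 1) with hX
  have hX1 : 0 < X := Nat.mul_pos (by omega) (by omega)
  have hsr : s + r + 1 ≤ X := Nat.le_mul_of_pos_left (s + r + 1) (show 0 < C + 1 by omega)
  have hC : C + 1 ≤ X := Nat.le_mul_of_pos_right (C + 1) (show 0 < s + r + 1 by omega)
  induction m with
  | zero => simpa [ggFun, expoFun] using Nat.one_le_pow 1 X hX1
  | succ m ih =>
    have hgg1 : 1 ≤ ggFun C D s r m := ggFun_pos C D s r m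
    have h1 : s * ggFun C D s r m + r ≤ X ^ (expoFun D m + 1) := by
      calc s * ggFun C D s r m + r ≤ s * ggFun C D s r m + r * ggFun C D s r m + ggFun C D s r m := by
            have := Nat.le_mul_of_pos_right r hgg1
            omega
        _ = (s + r + 1) * ggFun C D s r m := by ring
        _ ≤ X * X ^ expoFun D m := Nat.mul_le_mul hsr ih
        _ = X ^ (expoFun D m + 1) := by rw [pow_succ]; ring
    have h2 : C * (s * ggFun C D s r m + r) ^ D + 1 ≤ X ^ (D * (expoFun D m + 1) + 1) := by
      calc C * (s * ggFun C D s r m + r) ^ D + 1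
          ≤ C * (X ^ (expoFun D m + 1)) ^ D + 1 :=
            Nat.add_le_add_right (Nat.mul_le_mul_left C (Nat.pow_le_pow_left h1 D)) 1
        _ ≤ (C + 1) * (X ^ (expoFun D m + 1)) ^ D := by
            have h3 : 1 ≤ (X ^ (expoFun D m + 1)) ^ D := Nat.one_le_pow _ _ (Nat.pow_pos hX1)
            calc C * (X ^ (expoFun D m + 1)) ^ D + 1
                ≤ C * (X ^ (expoFun D m + 1)) ^ D + (X ^ (expoFun D m + 1)) ^ D := by omega
              _ = (C + 1) * (X ^ (expoFun D m + 1)) ^ D := by ring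
        _ ≤ X * X ^ ((expoFun D m + 1) * D) := by
            rw [← pow_mul]
            exact Nat.mul_le_mul hC (le_refl _)
        _ = X ^ (D * (expoFun D m + 1) + 1) := by rw [← pow_succ']; ring_nf
    calc ggFun C D s r (m + 1) = ggFun C D s r m * (C * (s * ggFun C D s r m + r) ^ D + 1) := rfl
      _ ≤ X ^ expoFun D m * X ^ (D * (expoFun D m + 1) + 1) := Nat.mul_le_mul ih h2
      _ = X ^ (expoFun D m + (D * (expoFun D m + 1) + 1)) := by rw [← pow_add]
      _ = X ^ expoFun D (m + 1) := by
          congr 1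
          show _ = (D + 1) * (expoFun D m + 1)
          ring

lemma final_bound (C D d s r : ℕ) :
    s * ggFun C D s r d ≤
      (2 * (C + 1)) ^ (expoFun D d + 1) * (s + r) ^ (expoFun D d + 1) := by
  rcases Nat.eq_zero_or_pos (s + r) with h0 | h1
  · have hs : s = 0 := by omega
    simp [hs]
  · set X := (C + 1) * (s + r + 1) with hX
    have h2 : s * ggFun C D s r d ≤ X ^ (expoFun D d + 1) := by
      calc s * ggFun C D s r d ≤ X * X ^ expoFun D d := by
            refine Nat.mul_le_mul ?_ (ggFun_le C D s r d)
            calc s ≤ s + r + 1 := by omega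
              _ ≤ X := Nat.le_mul_of_pos_left (s + r + 1) (show 0 < C + 1 by omega)
        _ = X ^ (expoFun D d + 1) := by rw [pow_succ]; ring
    have h3 : X ≤ 2 * (C + 1) * (s + r) := by
      calc X = (C + 1) * (s + r + 1) := rfl
        _ ≤ (C + 1) * (2 * (s + r)) := Nat.mul_le_mul_left _ (by omega)
        _ = 2 * (C + 1) * (s + r) := by ring
    calc s * ggFun C D s r d ≤ X ^ (expoFun D d + 1) := h2
      _ ≤ (2 * (C + 1) * (s + r)) ^ (expoFun D d + 1) := Nat.pow_le_pow_left h3 _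
      _ = (2 * (C + 1)) ^ (expoFun D d + 1) * (s + r) ^ (expoFun D d + 1) := mul_pow _ _ _

end Assembly
/-- (Relative regularization.) Given constants `C, D` and `d ≥ 1` there
exist constants `E, F'` such that: for any field `K`, homogeneous `f 1, ..., f s` of
positive degrees at most `d`, and any `r ≥ 0`, there is a `(C, D, r)`-strong tower `T` of
degree `(1, 2, ..., d)` of total size at most `E·(s+r)^F'` whose ideal contains the ideal
`(f_1, ..., f_s)`; moreover if all the `f i` have odd degree, `T` may be chosen to consist
only of forms of odd degree (its even-degree layers are empty). -/
theorem stmt_5 (C D : ℕ) (d : ℕ) (hd : 1 ≤ d) :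
    ∃ E F' : ℕ, ∀ (K : Type) [Field K] (n s : ℕ)
      (f : Fin s → MvPolynomial (Fin n) K) (df : Fin s → ℕ),
      (∀ i, 0 < df i ∧ df i ≤ d ∧ (f i).IsHomogeneous (df i)) →
      ∀ r : ℕ,
      ∃ T : Tower K (Fin n), T.IsHomog ∧ T.h = d ∧ (∀ i < d, T.deg i = i + 1) ∧
        T.IsStrong C D r ∧ T.totalSize ≤ E * (s + r) ^ F' ∧
        Ideal.span (Set.range f) ≤ T.idealOfAll ∧
        ((∀ i, Odd (df i)) → ∀ i < T.h, Even (T.deg i) → T.size i = 0) := by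
  classical
  refine ⟨(2 * (C + 1)) ^ (expoFun D d + 1), expoFun D d + 1, ?_⟩
  intro K _ n s f df hdf r
  set v := vFun C D d s r with hv
  set Tempty : Tower K (Fin n) :=
    ⟨d, fun k => k + 1, fun _ => 0, fun _ _ => 0⟩ with hTe
  set l0 : List (ℕ × MvPolynomial (Fin n) K) :=
    List.ofFn (fun i : Fin s => (df i - 1, f i)) with hl0
  set T0 : Tower K (Fin n) := Tempty.addForms l0 with hT0
  have hl0mem : ∀ q ∈ l0, ∃ i : Fin s, (df i - 1, f i) = q := by
    intro q hq
    rw [hl0, List.mem_ofFn] at hq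
    exact hq
  have hTeh : Tempty.h = d := rfl
  have hT0h : T0.h = d := by rw [hT0, Tower.h_addForms, hTeh]
  have hT0deg : T0.deg = fun k => k + 1 := by rw [hT0, Tower.deg_addForms]
  have hTehomog : Tempty.IsHomog := by
    intro i _ j hj
    exact absurd hj (by simp [hTe])
  have hT0homog : T0.IsHomog := by
    refine Tower.isHomog_addForms hTehomog ?_
    intro q hq
    obtain ⟨i, hi⟩ := hl0mem q hq
    obtain ⟨h1, h2, h3⟩ := hdf i
    rw [← hi]
    show (f i).IsHomogeneous (df i - 1 + 1)
    rw [(by omega : df i - 1 + 1 = df i)]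
    exact h3
  have hl0lt : ∀ q ∈ l0, Prod.fst q < Tempty.h := by
    intro q hq
    obtain ⟨i, hi⟩ := hl0mem q hq
    obtain ⟨h1, h2, h3⟩ := hdf i
    rw [← hi, hTeh]
    show df i - 1 < d
    omega
  have hphiTe : Tower.phi v Tempty = 0 := by
    unfold Tower.phi
    exact Finset.sum_eq_zero fun k _ => by simp [hTe]
  have hphiT0 : Tower.phi v T0 ≤ s * v (d - 1) := by
    rw [hT0, Tower.phi_addForms v Tempty hl0lt, hphiTe, zero_add]
    have h8 : (l0.map (fun q => v q.1)).sum ≤ (l0.map (fun q => v q.1)).length • v (d - 1) := by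
      refine List.sum_le_card_nsmul _ _ fun x hx => ?_
      rw [List.mem_map] at hx
      obtain ⟨q, hq, rfl⟩ := hx
      obtain ⟨i, hi⟩ := hl0mem q hq
      obtain ⟨h1, h2, h3⟩ := hdf i
      refine vFun_mono C D d s r ?_
      rw [← hi]
      show df i - 1 ≤ d - 1
      omega
    rw [smul_eq_mul, List.length_map, hl0, List.length_ofFn] at h8
    exact h8
  have hspan : Ideal.span (Set.range f) ≤ T0.idealOfAll := by
    refine Ideal.span_le.2 ?_
    rintro p ⟨i, rfl⟩
    refine Tower.mem_idealOfAll (Tower.mem_addForms_of_mem_list Tempty l0 (b := df i - 1) (p := f i) ?_ ?_)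
    · rw [hl0, List.mem_ofFn]
      exact ⟨i, rfl⟩
    · rw [hTeh]
      obtain ⟨h1, h2, h3⟩ := hdf i
      omega
  have hsggd : s * v (d - 1) = s * ggFun C D s r d := by rw [hv, vFun_top C D d s r hd]
  have hfinal : s * v (d - 1) ≤
      (2 * (C + 1)) ^ (expoFun D d + 1) * (s + r) ^ (expoFun D d + 1) := by
    rw [hsggd]
    exact final_bound C D d s r
  by_cases hoddall : ∀ i, Odd (df i)
  · -- all degrees odd
    have hodd0 : (true : Bool) = true → ∀ k < d, Even (k + 1) → T0.size k = 0 := by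
      intro _ k hk hke
      rw [hT0]
      have : Tempty.size k = 0 := rfl
      rw [Tower.size_addForms_of_notin Tempty ?_, this]
      intro q hq
      obtain ⟨i, hi⟩ := hl0mem q hq
      obtain ⟨h1, h2, h3⟩ := hdf i
      rw [← hi]
      show ¬ df i - 1 = k
      intro hc
      have : df i = k + 1 := by omega
      exact (Nat.not_odd_iff_even.2 hke) (this ▸ hoddall i)
    obtain ⟨T', hc1, hc2, hc3, hc4, hc5, hc6, hc7⟩ :=
      tower_regularize C D d r v (vFun_pos C D d s r) (vFun_mono C D d s r)
        (s * v (d - 1)) (key_ineq C D d s r hd) true (s * v (d - 1)) T0 hT0h hT0deg hT0homog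
        hphiT0 hphiT0 hodd0
    refine ⟨T', hc3, hc1, fun i _ => by rw [hc2], hc4, ?_, le_trans hspan hc6, ?_⟩
    · calc T'.totalSize ≤ Tower.phi v T' := Tower.totalSize_le_phi (vFun_pos C D d s r) T'
        _ ≤ Tower.phi v T0 := hc5
        _ ≤ s * v (d - 1) := hphiT0
        _ ≤ _ := hfinal
    · intro _ i hih hie
      rw [hc2] at hie
      exact hc7 rfl i (hc1 ▸ hih) hie
  · -- not all degrees odd: the parity clause is vacuous
    have hodd0 : (false : Bool) = true → ∀ k < d, Even (k + 1) → T0.size k = 0 := by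
      intro hc
      exact absurd hc (by simp)
    obtain ⟨T', hc1, hc2, hc3, hc4, hc5, hc6, hc7⟩ :=
      tower_regularize C D d r v (vFun_pos C D d s r) (vFun_mono C D d s r)
        (s * v (d - 1)) (key_ineq C D d s r hd) false (s * v (d - 1)) T0 hT0h hT0deg hT0homog
        hphiT0 hphiT0 hodd0
    refine ⟨T', hc3, hc1, fun i _ => by rw [hc2], hc4, ?_, le_trans hspan hc6, ?_⟩
    · calc T'.totalSize ≤ Tower.phi v T' := Tower.totalSize_le_phi (vFun_pos C D d s r) T'
        _ ≤ Tower.phi v T0 := hc5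
        _ ≤ s * v (d - 1) := hphiT0
        _ ≤ _ := hfinal
    · intro hall
      exact absurd hall hoddall
end

section
/- Given constants A, B there exist constants C = C(A,B) and D = D(A,B) such that for every tower F of forms (with top layer of size s_h) and every r ≥ 0: if F is (C, D, r)-strong then F is (A(r+s_h)^B, B, A(r+s_h)^B)-strong. Moreover (with no hypothesis on C, D): if a tower F is (A, B, r+|G|)-strong and a tower G of forms, considered modulo the ideal generated by F, is (A, B, r)-strong, then the combined tower (F, G) obtained by placing the layers of G above those of F is (A, B, r)-strong. -/
open MvPolynomial

section Aux

lemma key_nat (A B r s T : ℕ) (hsT : s ≤ T) :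
    A * (r + s) ^ B * (T + A * (r + s) ^ B) ^ B
      ≤ A * (A + 1) ^ B * (T + r) ^ (B * (B + 2)) := by
  rcases Nat.eq_zero_or_pos B with hB | hB
  · subst hB; simp
  rcases Nat.eq_zero_or_pos (T + r) with ht | ht
  · have hT : T = 0 := by omega
    have hr : r = 0 := by omega
    have hs : s = 0 := by omega
    subst hT; subst hr; subst hs
    simp [zero_pow hB.ne', zero_pow (show B * (B + 2) ≠ 0 by positivity)]
  have h1 : r + s ≤ T + r := by omega
  have h2 : A * (r + s) ^ B ≤ A * (T + r) ^ B :=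
    Nat.mul_le_mul_left _ (Nat.pow_le_pow_left h1 B)
  have h3 : T + A * (r + s) ^ B ≤ (A + 1) * (T + r) ^ (B + 1) := by
    have e1 : T ≤ (T + r) ^ (B + 1) :=
      le_trans (by omega) (Nat.le_self_pow (by omega) _)
    have e2 : A * (r + s) ^ B ≤ A * (T + r) ^ (B + 1) :=
      le_trans h2 (Nat.mul_le_mul_left _ (Nat.pow_le_pow_right ht (by omega)))
    calc T + A * (r + s) ^ B ≤ (T + r) ^ (B + 1) + A * (T + r) ^ (B + 1) :=
          Nat.add_le_add e1 e2
      _ = (A + 1) * (T + r) ^ (B + 1) := by ring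
  calc A * (r + s) ^ B * (T + A * (r + s) ^ B) ^ B
      ≤ (A * (T + r) ^ B) * ((A + 1) * (T + r) ^ (B + 1)) ^ B :=
        Nat.mul_le_mul h2 (Nat.pow_le_pow_left h3 B)
    _ = A * (A + 1) ^ B * (T + r) ^ (B + (B + 1) * B) := by
        rw [mul_pow, ← pow_mul]; ring
    _ = A * (A + 1) ^ B * (T + r) ^ (B * (B + 2)) := by ring_nf

namespace Tower

variable {K : Type u} {σ : Type v} [CommRing K]

lemma append_tailSize_lower (F G : Tower K σ) (i : ℕ) (hi : i ≤ F.h) :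
    (F.append G).tailSize i = F.tailSize i + G.totalSize := by
  simp only [tailSize, totalSize, append]
  rw [← Finset.sum_Ico_consecutive _ hi (Nat.le_add_right F.h G.h)]
  congr 1
  · exact Finset.sum_congr rfl fun x hx => if_pos (Finset.mem_Ico.mp hx).2
  · rw [Finset.sum_Ico_eq_sum_range]
    have : F.h + G.h - F.h = G.h := by omega
    rw [this]
    rw [show Finset.Ico 0 G.h = Finset.range G.h by
      rw [Finset.range_eq_Ico]]
    exact Finset.sum_congr rfl fun x _ => by
      rw [if_neg (by omega)]; congr 1; omega

lemma append_tailSize_upper (F G : Tower K σ) (k : ℕ) :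
    (F.append G).tailSize (F.h + k) = G.tailSize k := by
  simp only [tailSize, append]
  rw [Finset.sum_Ico_eq_sum_range, Finset.sum_Ico_eq_sum_range]
  have : F.h + G.h - (F.h + k) = G.h - k := by omega
  rw [this]
  exact Finset.sum_congr rfl fun x _ => by
    rw [if_neg (by omega)]; congr 1; omega

lemma append_lowerIdeal_lower (F G : Tower K σ) (i : ℕ) (hi : i ≤ F.h) :
    (F.append G).lowerIdeal i = F.lowerIdeal i := by
  simp only [lowerIdeal]
  congr 1
  ext p
  constructor
  · rintro ⟨i', hi', j, hj, rfl⟩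
    have h' : i' < F.h := lt_of_lt_of_le hi' hi
    simp only [append, if_pos h'] at hj ⊢
    exact ⟨i', hi', j, hj, rfl⟩
  · rintro ⟨i', hi', j, hj, rfl⟩
    have h' : i' < F.h := lt_of_lt_of_le hi' hi
    exact ⟨i', hi', j, by simpa [append, if_pos h'] using hj,
      by simp [append, if_pos h']⟩

lemma append_lowerIdeal_upper (F G : Tower K σ) (k : ℕ) :
    (F.append G).lowerIdeal (F.h + k) = F.idealOfAll ⊔ G.lowerIdeal k := by
  simp only [lowerIdeal, idealOfAll]
  rw [← Ideal.span_union]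
  congr 1
  ext p
  constructor
  · rintro ⟨i', hi', j, hj, rfl⟩
    by_cases h' : i' < F.h
    · left
      simp only [append, if_pos h'] at hj ⊢
      exact ⟨i', h', j, hj, rfl⟩
    · right
      simp only [append, if_neg h'] at hj ⊢
      exact ⟨i' - F.h, by omega, j, hj, rfl⟩
  · rintro (⟨i', hi', j, hj, rfl⟩ | ⟨k', hk', j, hj, rfl⟩)
    · exact ⟨i', by omega, j, by simpa [append, if_pos hi'] using hj,
        by simp [append, if_pos hi']⟩
    · refine ⟨F.h + k', by omega, j, ?_, ?_⟩
      · simpa [append, Nat.add_sub_cancel_left] using hj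
      · simp [append, Nat.add_sub_cancel_left]

end Tower

end Aux

/-- (i) Given `A, B` there exist `C, D` such that every `(C, D, r)`-strong
tower (with top layer of size `s_h`) is `(A(r+s_h)^B, B, A(r+s_h)^B)`-strong.
(ii) If a tower `F` is `(A, B, r+|G|)`-strong and a tower `G`, considered modulo the ideal
generated by `F`, is `(A, B, r)`-strong, then the combined tower obtained by placing the
layers of `G` above those of `F` is `(A, B, r)`-strong. -/
theorem stmt_6 (A B : ℕ) :
    ∃ C D : ℕ,
      (∀ (K : Type) [Field K] (σ : Type) (F : Tower K σ) (r : ℕ), 0 < F.h →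
        F.IsStrong C D r →
        F.IsStrong (A * (r + F.size (F.h - 1)) ^ B) B (A * (r + F.size (F.h - 1)) ^ B))
      ∧
      (∀ (K : Type) [Field K] (σ : Type) (F G : Tower K σ) (r : ℕ),
        F.IsStrong A B (r + G.totalSize) →
        G.IsStrongOver F.idealOfAll A B r →
        (F.append G).IsStrong A B r) := by
  refine ⟨A * (A + 1) ^ B, B * (B + 2), ?_, ?_⟩
  · intro K _ σ F r hh hF i hi
    have hF' := hF i hi
    set s := F.size (F.h - 1) with hs
    set T := F.tailSize i with hT
    have hsT : s ≤ T := by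
      refine Finset.single_le_sum (f := F.size) (fun _ _ => Nat.zero_le _) ?_
      exact Finset.mem_Ico.mpr ⟨by omega, by omega⟩
    have key := key_nat A B r s T hsT
    exact lt_of_le_of_lt (by exact_mod_cast key) hF'
  · intro K _ σ F G r hF hG i hi
    have hih : i < F.h + G.h := hi
    by_cases hiF : i < F.h
    · have h1 := Tower.append_tailSize_lower F G i hiF.le
      have h2 := Tower.append_lowerIdeal_lower F G i hiF.le
      have hdeg : (F.append G).deg i = F.deg i := if_pos hiF
      have hsize : (F.append G).size i = F.size i := if_pos hiF
      have hform : (F.append G).form i = F.form i := if_pos hiF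
      rw [h1, h2, hdeg, hsize, hform]
      have e : F.tailSize i + G.totalSize + r = F.tailSize i + (r + G.totalSize) := by ring
      rw [e]
      exact hF i hiF
    · obtain ⟨k, rfl⟩ : ∃ k, i = F.h + k := ⟨i - F.h, by omega⟩
      have hk : k < G.h := by omega
      have h1 := Tower.append_tailSize_upper F G k
      have h2 := Tower.append_lowerIdeal_upper F G k
      have hne : ¬ F.h + k < F.h := by omega
      have hdeg : (F.append G).deg (F.h + k) = G.deg k := by
        simp [Tower.append, hne]
      have hsize : (F.append G).size (F.h + k) = G.size k := by
        simp [Tower.append, hne]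
      have hform : (F.append G).form (F.h + k) = G.form k := by
        simp [Tower.append, hne]
      rw [h1, h2, hdeg, hsize, hform, bot_sup_eq]
      exact hG k hk
end

section
/- Let K be an algebraically closed field, d ≥ 2, s ≥ 1, and m ≥ d. Then there is a dense open subset of the space of s-tuples (f_1,...,f_s) of forms of degree d in m variables on which the (absolute) collective strength satisfies str(f_1,...,f_s) > (m - s)/(d·2^d). -/
open MvPolynomial

/-- The `s`-tuple of degree-`d` forms in `m` variables determined by a coefficient
vector `c` (one coefficient for each pair of an index `i < s` and a monomial of degree `d`). -/
noncomputable def tupleOfCoeffs (K : Type u) [CommSemiring K] (m d s : ℕ)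
    (c : Fin s × {μ // μ ∈ Finset.Nat.antidiagonalTuple m d} → K) :
    Fin s → MvPolynomial (Fin m) K :=
  fun i => ∑ μ ∈ (Finset.Nat.antidiagonalTuple m d).attach,
    MvPolynomial.C (c (i, μ)) * ∏ t : Fin m, MvPolynomial.X t ^ (μ.1 t)


/-! ### Auxiliary machinery for Statement 11 -/

section Stmt11Aux

open MvPolynomial Finset

local notation "AT" => Finset.Nat.antidiagonalTuple

/-! #### Algebraic dependence by counting -/

lemma mem_span_monomials {K : Type} [Field K] {ι : Type} [Fintype ι] {M : ℕ}
    (q : MvPolynomial ι K) (hq : q.totalDegree ≤ M) :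
    q ∈ Submodule.span K (Set.range (fun b : ι → Fin (M+1) =>
      (monomial (Finsupp.equivFunOnFinite.symm (fun i => (b i : ℕ))) 1 : MvPolynomial ι K))) := by
  classical
  nth_rewrite 1 [q.as_sum]
  apply Submodule.sum_mem
  intro ν hν
  have hν2 : ∀ i, ν i ≤ M := by
    intro i
    refine le_trans ?_ (le_trans (MvPolynomial.le_totalDegree hν) hq)
    exact Finsupp.le_degree i ν
  have : (monomial ν (coeff ν q) : MvPolynomial ι K)
      = (coeff ν q) • monomial ν (1:K) := by
    rw [MvPolynomial.smul_monomial, smul_eq_mul, mul_one]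
  rw [this]
  apply Submodule.smul_mem
  apply Submodule.subset_span
  exact ⟨fun i => ⟨ν i, Nat.lt_succ_of_le (hν2 i)⟩,
    congrArg (fun t => (monomial t (1:K) : MvPolynomial ι K))
      (Finsupp.equivFunOnFinite.symm_apply_eq.mpr rfl)⟩

lemma exists_annihilator {K : Type} [Field K] {ι κ : Type} [Fintype ι] [Fintype κ]
    (h : Fintype.card ι < Fintype.card κ) (p : κ → MvPolynomial ι K) :
    ∃ q : MvPolynomial κ K, q ≠ 0 ∧ MvPolynomial.aeval p q = 0 := by
  classical
  by_contra hcon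
  push_neg at hcon
  have hinj : Function.Injective (MvPolynomial.aeval (R := K) p) := by
    rw [injective_iff_map_eq_zero]
    intro a ha
    by_contra ha0
    exact (hcon a ha0) ha
  set I := Fintype.card ι with hI
  set E := Fintype.card κ with hE
  set δ := (Finset.univ.sup fun k => (p k).totalDegree) + 1 with hδ
  have hδpos : 1 ≤ δ := Nat.le_add_left 1 _
  have hδk : ∀ k, (p k).totalDegree ≤ δ := fun k =>
    le_trans (Finset.le_sup (f := fun k => (p k).totalDegree) (Finset.mem_univ k)) (Nat.le_succ _)
  set A := 2*δ*E + 2 with hA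
  set D := A^(I+1) * E with hD
  set x := A^(I+1) + 1 with hx
  set M := δ * D with hM
  set v : (κ → Fin x) → MvPolynomial ι K := fun b =>
    MvPolynomial.aeval (R := K) p (monomial (Finsupp.equivFunOnFinite.symm (fun k => (b k : ℕ))) 1) with hv
  have hvli : LinearIndependent K v := by
    have h1 : LinearIndependent K (fun ν : κ →₀ ℕ => (monomial ν (1:K) : MvPolynomial κ K)) := by
      have := (MvPolynomial.basisMonomials κ K).linearIndependent
      simpa using this
    have h2 : LinearIndependent K (fun b : (κ → Fin x) =>
        (monomial (Finsupp.equivFunOnFinite.symm (fun k => (b k : ℕ))) (1:K) : MvPolynomial κ K)) := by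
      apply h1.comp
      intro b b' hbb'
      have := Finsupp.equivFunOnFinite.symm.injective hbb'
      funext k
      have := congrFun this k
      exact Fin.ext this
    have h3 := h2.map' (MvPolynomial.aeval (R := K) p).toLinearMap
      (LinearMap.ker_eq_bot.mpr hinj)
    exact h3
  set w : Set (MvPolynomial ι K) := Set.range (fun b : ι → Fin (M+1) =>
      (monomial (Finsupp.equivFunOnFinite.symm (fun i => (b i : ℕ))) 1 : MvPolynomial ι K)) with hw
  have hrange : Set.range v ≤ Submodule.span K w := by
    rintro _ ⟨b, rfl⟩
    apply mem_span_monomials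
    · rw [hv]
      simp only
      rw [MvPolynomial.aeval_monomial, map_one, one_mul]
      set ν := Finsupp.equivFunOnFinite.symm (fun k => ((b k) : ℕ)) with hν
      have h1 : ν.prod (fun i k => p i ^ k) = ∏ k, p k ^ ν k :=
        Finsupp.prod_fintype _ _ (by simp)
      rw [h1]
      have hνk : ∀ k, ν k ≤ A^(I+1) := by
        intro k
        have := (b k).isLt
        simp only [hν, Finsupp.coe_equivFunOnFinite_symm]
        omega
      calc (∏ k, p k ^ ν k).totalDegree ≤ ∑ k, (p k ^ ν k).totalDegree :=
            MvPolynomial.totalDegree_finset_prod _ _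
        _ ≤ ∑ k, ν k * δ := Finset.sum_le_sum fun k _ =>
            le_trans (MvPolynomial.totalDegree_pow _ _) (Nat.mul_le_mul le_rfl (hδk k))
        _ ≤ ∑ _k : κ, A^(I+1) * δ := Finset.sum_le_sum fun k _ =>
            Nat.mul_le_mul (hνk k) le_rfl
        _ = E * (A^(I+1) * δ) := by
            rw [Finset.sum_const, Finset.card_univ, smul_eq_mul]
        _ = M := by rw [hM, hD]; ring
  have hcard : (x : ℕ)^E ≤ (M+1)^I := by
    have := linearIndependent_le_span' v hvli w hrange
    rw [Cardinal.mk_fintype] at this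
    have hle : Fintype.card (κ → Fin x) ≤ Fintype.card w := by exact_mod_cast this
    calc x^E = Fintype.card (κ → Fin x) := by simp [Fintype.card_fun, hE]
      _ ≤ Fintype.card w := hle
      _ ≤ Fintype.card (ι → Fin (M+1)) := Fintype.card_range_le _
      _ = (M+1)^I := by simp [Fintype.card_fun, hI]
  have hA2 : 2 ≤ A := by omega
  have hcontra : (M+1)^I < x^E := by
    have hE1 : I + 1 ≤ E := h
    have hMA : M + 1 ≤ A^(I+2) := by
      have h1 : 2*(M+1) = 2*δ*E * A^(I+1) + 2 := by rw [hM, hD]; ring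
      have h2 : 2*δ*E * A^(I+1) + 2 ≤ A * A^(I+1) + A^(I+1) := by
        have : (2:ℕ) ≤ A^(I+1) := le_trans hA2 (Nat.le_self_pow (by omega) _)
        have : 2*δ*E * A^(I+1) ≤ A * A^(I+1) := Nat.mul_le_mul_right _ (by omega)
        omega
      have h3 : A * A^(I+1) + A^(I+1) ≤ 2 * A^(I+2) := by
        have : A^(I+2) = A * A^(I+1) := by ring
        have h4 : A^(I+1) ≤ A^(I+2) := Nat.pow_le_pow_right (by omega) (by omega)
        omega
      omega
    calc (M+1)^I ≤ (A^(I+2))^I := Nat.pow_le_pow_left hMA I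
      _ = A^((I+2)*I) := by rw [← pow_mul]
      _ < A^((I+1)*(I+1)) := by
          apply Nat.pow_lt_pow_right (by omega)
          nlinarith
      _ = (A^(I+1))^(I+1) := by rw [← pow_mul]
      _ < x^(I+1) := by
          apply Nat.pow_lt_pow_left (by omega) (by omega)
      _ ≤ x^E := Nat.pow_le_pow_right (by omega) hE1
  omega

/-! #### Cardinality facts for `antidiagonalTuple` -/

lemma AT_mono {m : ℕ} (hm : 0 < m) {e e' : ℕ} (h : e ≤ e') :
    (AT m e).card ≤ (AT m e').card := by
  classical
  set i0 : Fin m := ⟨0, hm⟩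
  set φ : (Fin m → ℕ) → (Fin m → ℕ) := fun μ t => μ t + (if t = i0 then e' - e else 0) with hφ
  apply Finset.card_le_card_of_injOn φ
  · intro μ hμ
    rw [Finset.mem_coe, Finset.Nat.mem_antidiagonalTuple] at hμ ⊢
    rw [hφ]
    simp only
    rw [Finset.sum_add_distrib, hμ, Finset.sum_ite_eq' Finset.univ i0 (fun _ => e' - e)]
    simp
    omega
  · intro μ _ μ' _ hμμ'
    funext t
    have := congrFun hμμ' t
    simp only [hφ] at this
    omega

lemma le_AT_card {m e : ℕ} (he : 1 ≤ e) :
    m ≤ (AT m e).card := by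
  classical
  have := Finset.card_le_card_of_injOn
    (f := fun (i : Fin m) (t : Fin m) => if t = i then e else 0)
    (s := (Finset.univ : Finset (Fin m))) (t := AT m e)
    (by
      intro i _
      rw [Finset.mem_coe, Finset.Nat.mem_antidiagonalTuple]
      rw [Finset.sum_ite_eq' Finset.univ i (fun _ => e)]
      simp)
    (by
      intro i _ i' _ hii'
      by_contra hne
      have := congrFun hii' i
      simp [hne] at this
      omega)
  simpa using this

lemma AT_count {m d : ℕ} (hd : 1 ≤ d) :
    m * (AT m (d-1)).card ≤ d * (AT m d).card := by
  classical
  rcases Nat.eq_zero_or_pos m with hm | hm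
  · simp [hm]
  set i0 : Fin m := ⟨0, hm⟩ with hi0
  set δ : Fin m → (Fin m → ℕ) := fun i t => if t = i then 1 else 0 with hδ
  set r : (Fin m → ℕ) → (Fin m → ℕ) → Prop := fun μ ν => ∃ i, ν = μ + δ i with hr
  letI : ∀ a b, Decidable (r a b) := fun a b => Classical.dec _
  have key := Finset.card_nsmul_le_card_nsmul (R := ℕ) r (s := AT m (d-1)) (t := AT m d)
    (m := m) (n := d)
    (by
      intro μ hμ
      rw [Finset.Nat.mem_antidiagonalTuple] at hμ
      have := Finset.card_le_card_of_injOn (f := fun i : Fin m => μ + δ i)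
        (s := (Finset.univ : Finset (Fin m))) (t := (AT m d).bipartiteAbove r μ)
        (by
          intro i _
          rw [Finset.mem_coe, Finset.mem_bipartiteAbove]
          constructor
          · rw [Finset.Nat.mem_antidiagonalTuple]
            have : ∑ t, (μ + δ i) t = (∑ t, μ t) + ∑ t, δ i t := by
              simp [Finset.sum_add_distrib]
            rw [this, hμ]
            have : ∑ t, δ i t = 1 := by
              rw [hδ]
              simp only
              rw [Finset.sum_ite_eq' Finset.univ i (fun _ => 1)]
              simp
            omega
          · exact ⟨i, rfl⟩)
        (by
          intro i _ i' _ h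
          by_contra hne
          have := congrFun h i
          simp [hδ, hne] at this)
      simpa using this)
    (by
      intro ν hν
      rw [Finset.Nat.mem_antidiagonalTuple] at hν
      set F : (Fin m → ℕ) → Fin m := fun μ =>
        if h : ∃ i, ν = μ + δ i then h.choose else i0 with hF
      have hFspec : ∀ μ, (∃ i, ν = μ + δ i) → ν = μ + δ (F μ) := by
        intro μ h
        rw [hF]
        simp only [dif_pos h]
        exact h.choose_spec
      have h1 : ((AT m (d-1)).bipartiteBelow r ν).card ≤
          (Finset.univ.filter (fun i : Fin m => ν i ≠ 0)).card := by
        apply Finset.card_le_card_of_injOn F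
        · intro μ hμ
          rw [Finset.mem_coe, Finset.mem_bipartiteBelow] at hμ
          have hspec := hFspec μ hμ.2
          simp only [Finset.mem_coe, Finset.mem_filter, Finset.mem_univ, true_and]
          rw [hspec]
          simp [hδ]
        · intro μ hμ μ' hμ' hFμ
          rw [Finset.mem_coe, Finset.mem_bipartiteBelow] at hμ hμ'
          have s1 := hFspec μ hμ.2
          have s2 := hFspec μ' hμ'.2
          funext t
          have e1 := congrFun s1 t
          have e2 := congrFun s2 t
          rw [hFμ] at e1
          simp only [Pi.add_apply] at e1 e2
          omega
      refine le_trans h1 ?_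
      calc (Finset.univ.filter (fun i : Fin m => ν i ≠ 0)).card
          = ∑ _i ∈ Finset.univ.filter (fun i : Fin m => ν i ≠ 0), 1 :=
            (Finset.card_eq_sum_ones _)
        _ ≤ ∑ i ∈ Finset.univ.filter (fun i : Fin m => ν i ≠ 0), ν i := by
            apply Finset.sum_le_sum
            intro i hi
            rw [Finset.mem_filter] at hi
            omega
        _ ≤ ∑ i, ν i := Finset.sum_le_sum_of_subset (Finset.filter_subset _ _)
        _ = d := hν)
  simpa [smul_eq_mul, mul_comm] using key

/-! #### Coefficient lemmas -/

noncomputable def toF {m : ℕ} (μ : Fin m → ℕ) : Fin m →₀ ℕ := Finsupp.equivFunOnFinite.symm μ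

lemma toF_apply {m : ℕ} (μ : Fin m → ℕ) (i : Fin m) : toF μ i = μ i := rfl

lemma toF_add {m : ℕ} (μ1 μ2 : Fin m → ℕ) : toF (μ1 + μ2) = toF μ1 + toF μ2 := by
  ext i; rfl

lemma toF_inj {m : ℕ} : Function.Injective (toF (m := m)) :=
  Finsupp.equivFunOnFinite.symm.injective

lemma toF_coe {m : ℕ} (ν : Fin m →₀ ℕ) : toF (fun i => ν i) = ν := by
  ext i; rfl

lemma degree_toF {m : ℕ} (μ : Fin m → ℕ) : (toF μ).degree = ∑ i, μ i := by
  rw [Finsupp.degree_eq_sum]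
  rfl

lemma mem_AT_iff_degree {m e : ℕ} (μ : Fin m → ℕ) :
    μ ∈ AT m e ↔ (toF μ).degree = e := by
  rw [Finset.Nat.mem_antidiagonalTuple, degree_toF]

variable {K : Type} [CommSemiring K]

lemma prodX_eq_monomial {m : ℕ} (μ : Fin m → ℕ) :
    (∏ t : Fin m, (X t : MvPolynomial (Fin m) K) ^ μ t) = monomial (toF μ) 1 := by
  have h0 : ∀ i ∈ Finset.univ, i ∉ (toF μ).support →
      (X i : MvPolynomial (Fin m) K) ^ (toF μ) i = 1 := by
    intro i _ hi
    rw [Finsupp.notMem_support_iff] at hi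
    rw [hi, pow_zero]
  rw [← MvPolynomial.prod_X_pow_eq_monomial,
      Finset.prod_subset (Finset.subset_univ ((toF μ).support)) h0]
  exact Finset.prod_congr rfl (fun i _ => rfl)

lemma homog_sum_monomial {m α : ℕ} {g : MvPolynomial (Fin m) K}
    (hg : g.IsHomogeneous α) :
    ∑ μ1 ∈ (AT m α).attach, monomial (toF μ1.1) (coeff (toF μ1.1) g) = g := by
  classical
  apply MvPolynomial.ext
  intro ν
  rw [MvPolynomial.coeff_sum]
  simp only [MvPolynomial.coeff_monomial]
  by_cases hν : (fun i => ν i) ∈ AT m α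
  · rw [Finset.sum_eq_single (⟨fun i => ν i, hν⟩ : {x // x ∈ AT m α})]
    · rw [if_pos (toF_coe ν), toF_coe]
    · intro b _ hb
      rw [if_neg]
      intro hc
      apply hb
      apply Subtype.ext
      have : b.1 = fun i => ν i := by
        funext i
        rw [← toF_apply b.1, hc]
      exact this
    · intro h
      exact absurd (Finset.mem_attach _ _) h
  · rw [Finset.sum_eq_zero, eq_comm]
    · apply hg.coeff_eq_zero
      intro hc
      apply hν
      rw [mem_AT_iff_degree, toF_coe]
      exact hc
    · intro b _
      rw [if_neg]
      intro hc
      apply hν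
      have : (fun i => ν i) = b.1 := by
        funext i
        rw [← toF_apply b.1, hc]
      rw [this]
      exact b.2

lemma coeff_mul_homog {m α β : ℕ} {g h : MvPolynomial (Fin m) K}
    (hg : g.IsHomogeneous α) (hh : h.IsHomogeneous β) (μ : Fin m → ℕ) :
    coeff (toF μ) (g * h) =
      ∑ μ1 ∈ (AT m α).attach, ∑ μ2 ∈ (AT m β).attach,
        if μ1.1 + μ2.1 = μ then coeff (toF μ1.1) g * coeff (toF μ2.1) h else 0 := by
  classical
  conv_lhs => rw [← homog_sum_monomial hg, ← homog_sum_monomial hh]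
  rw [Finset.sum_mul_sum]
  rw [MvPolynomial.coeff_sum]
  simp only [MvPolynomial.coeff_sum, MvPolynomial.monomial_mul, MvPolynomial.coeff_monomial]
  apply Finset.sum_congr rfl
  intro μ1 _
  apply Finset.sum_congr rfl
  intro μ2 _
  simp only [← toF_add, toF_inj.eq_iff]

lemma coeff_tupleOfCoeffs {m d s : ℕ} (c : Fin s × {μ // μ ∈ AT m d} → K)
    (i : Fin s) (μ : {μ // μ ∈ AT m d}) :
    coeff (toF μ.1) (tupleOfCoeffs K m d s c i) = c (i, μ) := by
  classical
  rw [tupleOfCoeffs]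
  rw [MvPolynomial.coeff_sum]
  have hterm : ∀ μ' : {μ // μ ∈ AT m d},
      (MvPolynomial.C (c (i, μ')) * ∏ t : Fin m, (X t : MvPolynomial (Fin m) K) ^ (μ'.1 t))
        = monomial (toF μ'.1) (c (i, μ')) := by
    intro μ'
    rw [prodX_eq_monomial, MvPolynomial.C_mul_monomial, mul_one]
  simp only [hterm, MvPolynomial.coeff_monomial]
  rw [Finset.sum_eq_single μ]
  · rw [if_pos rfl]
  · intro b _ hb
    rw [if_neg]
    intro hc
    exact hb (Subtype.ext (toF_inj hc))
  · intro hμ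
    exact absurd (Finset.mem_attach _ _) hμ

lemma tupleOfCoeffs_isHomog {m d s : ℕ} (c : Fin s × {μ // μ ∈ AT m d} → K) (i : Fin s) :
    (tupleOfCoeffs K m d s c i).IsHomogeneous d := by
  rw [tupleOfCoeffs]
  apply MvPolynomial.IsHomogeneous.sum
  intro μ _
  rw [prodX_eq_monomial, MvPolynomial.C_mul_monomial, mul_one]
  exact MvPolynomial.isHomogeneous_monomial _ ((mem_AT_iff_degree μ.1).mp μ.2)

/-! #### Misc lemmas -/

lemma eval_aeval' {ι κ : Type} (x : ι → K) (P : κ → MvPolynomial ι K)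
    (q : MvPolynomial κ K) :
    eval x (MvPolynomial.aeval (R := K) P q) = eval (fun k => eval x (P k)) q := by
  have h : (eval x).comp ((MvPolynomial.aeval (R := K) P) : MvPolynomial κ K →+* MvPolynomial ι K)
      = eval (fun k => eval x (P k)) := by
    apply MvPolynomial.ringHom_ext
    · intro a; simp
    · intro k; simp
  exact RingHom.congr_fun h q

lemma StrLE.of_le {K σ : Type} [CommRing K] {I : Ideal (MvPolynomial σ K)} {d t N : ℕ}
    {f : MvPolynomial σ K} (hd : 2 ≤ d) (h : StrLE I d f t) (htN : t ≤ N) : StrLE I d f N := by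
  obtain ⟨g, hh, hgdeg, hhdeg, hmem⟩ := h
  refine ⟨fun i => if hi : (i : ℕ) < t then g ⟨i, hi⟩ else 0,
          fun i => if hi : (i : ℕ) < t then hh ⟨i, hi⟩ else 0, ?_, ?_, ?_⟩
  · intro i
    by_cases hi : (i:ℕ) < t
    · simp only [dif_pos hi]; exact hgdeg _
    · exact ⟨1, one_pos, by omega, by simp only [dif_neg hi]; exact MvPolynomial.isHomogeneous_zero _ _ _⟩
  · intro i
    by_cases hi : (i:ℕ) < t
    · simp only [dif_pos hi]; exact hhdeg _
    · exact ⟨1, one_pos, by omega, by simp only [dif_neg hi]; exact MvPolynomial.isHomogeneous_zero _ _ _⟩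
  · have key : (∑ i : Fin N, (if hi : (i : ℕ) < t then g ⟨i, hi⟩ else 0) *
        (if hi : (i : ℕ) < t then hh ⟨i, hi⟩ else 0)) = ∑ i : Fin t, g i * hh i := by
      have hfun : ∀ i : Fin N,
          (if hi : (i:ℕ) < t then g ⟨i,hi⟩ else 0) * (if hi : (i:ℕ) < t then hh ⟨i,hi⟩ else 0)
          = (fun n : ℕ => if hn : n < t then g ⟨n,hn⟩ * hh ⟨n,hn⟩ else 0) (i : ℕ) := by
        intro i
        by_cases hi : (i:ℕ) < t <;> simp [hi]
      rw [Finset.sum_congr rfl (fun i _ => hfun i)]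
      rw [Fin.sum_univ_eq_sum_range (fun n => if hn : n < t then g ⟨n,hn⟩ * hh ⟨n,hn⟩ else 0) N]
      rw [show (∑ n ∈ Finset.range N, if hn : n < t then g ⟨n,hn⟩ * hh ⟨n,hn⟩ else 0)
            = ∑ n ∈ Finset.range t, if hn : n < t then g ⟨n,hn⟩ * hh ⟨n,hn⟩ else 0 from
          (Finset.sum_subset (Finset.range_subset_range.mpr htN) (fun n _ hn => by
            rw [Finset.mem_range] at hn
            rw [dif_neg hn])).symm]
      rw [← Fin.sum_univ_eq_sum_range]
      apply Finset.sum_congr rfl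
      intro i _
      rw [dif_pos i.isLt]
    rw [key]
    exact hmem

/-! #### The parametrizing polynomial maps -/

/-- Index type for the domain of the parametrizing polynomial map. -/
abbrev DomIdx (m d s N : ℕ) (j : Fin s) : Type :=
  ({i : Fin s // i ≠ j} × Option {μ // μ ∈ AT m d}) ⊕
  (Fin N × Σ e : Fin (d-1), ({μ // μ ∈ AT m ((e:ℕ)+1)} ⊕ {μ // μ ∈ AT m (d-1-(e:ℕ))}))

/-- The parametrizing polynomial map. -/
noncomputable def Pmap (K : Type) [CommRing K] (m d s N : ℕ) (j : Fin s) :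
    (Fin s × {μ // μ ∈ AT m d}) → MvPolynomial (DomIdx m d s N j) K :=
  fun k =>
    if h : k.1 = j then
      (∑ t : Fin N, ∑ e : Fin (d-1),
        ∑ μ1 ∈ (AT m ((e:ℕ)+1)).attach, ∑ μ2 ∈ (AT m (d-1-(e:ℕ))).attach,
          if μ1.1 + μ2.1 = k.2.1 then
            X (Sum.inr (t, ⟨e, Sum.inl μ1⟩)) * X (Sum.inr (t, ⟨e, Sum.inr μ2⟩))
          else 0)
      - ∑ i : {i : Fin s // i ≠ j}, X (Sum.inl (i, none)) * X (Sum.inl (i, some k.2))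
    else
      X (Sum.inl (⟨k.1, h⟩, some k.2))

lemma card_DomIdx_lt (m d s : ℕ) (hd : 2 ≤ d) (hs : 1 ≤ s) (hm : d ≤ m) (hsm : s ≤ m)
    (j : Fin s) :
    Fintype.card (DomIdx m d s ((m-s)/(d*2^d)) j)
      < Fintype.card (Fin s × {μ // μ ∈ AT m d}) := by
  classical
  set N := (m-s)/(d*2^d) with hN
  set Md := (AT m d).card with hMd
  set Md1 := (AT m (d-1)).card with hMd1
  have hm0 : 0 < m := by omega
  have hd0 : 0 < d := by omega
  have hcard1 : Fintype.card {i : Fin s // i ≠ j} = s - 1 := by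
    rw [Fintype.card_subtype_compl, Fintype.card_subtype_eq, Fintype.card_fin]
  have hcardAT : ∀ e : ℕ, Fintype.card {μ // μ ∈ AT m e} = (AT m e).card := by
    intro e
    exact Fintype.card_coe _
  have hcards : Fintype.card (DomIdx m d s N j)
      = (s-1) * (Md + 1) + N * ∑ e : Fin (d-1), ((AT m ((e:ℕ)+1)).card + (AT m (d-1-(e:ℕ))).card) := by
    rw [Fintype.card_sum, Fintype.card_prod, Fintype.card_prod, Fintype.card_option,
      Fintype.card_sigma, Fintype.card_fin, hcard1, hcardAT]
    congr 2
    apply Finset.sum_congr rfl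
    intro e _
    rw [Fintype.card_sum, hcardAT, hcardAT]
  have hcardκ : Fintype.card (Fin s × {μ // μ ∈ AT m d}) = s * Md := by
    rw [Fintype.card_prod, Fintype.card_fin, hcardAT]
  rw [hcards, hcardκ]
  -- numeric part
  have hmono : ∀ e : ℕ, e ≤ d-1 → (AT m e).card ≤ Md1 := fun e he => AT_mono hm0 he
  have hsum : (∑ e : Fin (d-1), ((AT m ((e:ℕ)+1)).card + (AT m (d-1-(e:ℕ))).card))
      ≤ (d-1) * (2 * Md1) := by
    calc _ ≤ ∑ _e : Fin (d-1), 2 * Md1 := by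
          apply Finset.sum_le_sum
          intro e _
          have h1 : (AT m ((e:ℕ)+1)).card ≤ Md1 := hmono _ (by have := e.isLt; omega)
          have h2 : (AT m (d-1-(e:ℕ))).card ≤ Md1 := hmono _ (by omega)
          omega
      _ = (d-1) * (2*Md1) := by
          rw [Finset.sum_const, Finset.card_univ, Fintype.card_fin, smul_eq_mul]
  have hkey : N * ((d-1) * (2 * Md1)) + s ≤ Md := by
    have h3 : m * Md1 ≤ d * Md := AT_count (by omega)
    have h4 : m ≤ Md1 := le_AT_card (by omega)
    have hN1 : N * (d * 2^d) ≤ m - s := Nat.div_mul_le_self _ _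
    have h5 : 2*N*d*(d-1) ≤ m - s := by
      have hp : 2*(d-1) ≤ 2^d := by
        have := Nat.lt_two_pow_self (n := d-1)
        have h2 : 2^(d-1+1) ≤ 2^d := Nat.pow_le_pow_right (by omega) (by omega)
        calc 2*(d-1) ≤ 2*2^(d-1) := by omega
          _ = 2^(d-1+1) := by ring
          _ ≤ 2^d := h2
      calc 2*N*d*(d-1) = N * (d * (2*(d-1))) := by ring
        _ ≤ N * (d * 2^d) := by
            apply Nat.mul_le_mul_left
            exact Nat.mul_le_mul_left _ hp
        _ ≤ m - s := hN1
    have h6 : d * (N * ((d-1) * (2 * Md1)) + s) ≤ d * Md := by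
      calc d * (N * ((d-1) * (2 * Md1)) + s) = (2*N*d*(d-1)) * Md1 + d * s := by ring
        _ ≤ (m-s) * Md1 + s * Md1 := by
            have e1 : (2*N*d*(d-1)) * Md1 ≤ (m-s) * Md1 := Nat.mul_le_mul_right _ h5
            have e2 : d * s ≤ s * Md1 := by
              rw [mul_comm d s]
              exact Nat.mul_le_mul_left _ (by omega)
            omega
        _ = m * Md1 := by
            rw [← Nat.add_mul]
            congr 1
            omega
        _ ≤ d * Md := h3
    exact Nat.le_of_mul_le_mul_left h6 hd0
  have hsMd : s ≤ Md := by
    have h4 : m ≤ Md1 := le_AT_card (by omega)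
    have h5 : Md1 ≤ Md := AT_mono hm0 (by omega)
    omega
  have hfin : N * ∑ e : Fin (d-1), ((AT m ((e:ℕ)+1)).card + (AT m (d-1-(e:ℕ))).card) + s ≤ Md :=
    le_trans (by exact Nat.add_le_add_right (Nat.mul_le_mul_left _ hsum) s) hkey
  -- conclude
  obtain ⟨a, rfl⟩ : ∃ a, s = a + 1 := ⟨s-1, by omega⟩
  simp only [Nat.add_sub_cancel]
  rw [Nat.add_mul, Nat.mul_add, one_mul, Nat.mul_one]
  set Q := N * ∑ e : Fin (d-1), ((AT m ((e:ℕ)+1)).card + (AT m (d-1-(e:ℕ))).card) with hQ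
  omega

/-- Anything with a nonzero combination of bounded strength is in the image of `Pmap`. -/
lemma key_surj {K : Type} [Field K] (m d s N : ℕ) (hd : 2 ≤ d) (j : Fin s)
    (c : Fin s × {μ // μ ∈ AT m d} → K) (a : Fin s → K) (haj : a j ≠ 0)
    (hstr : StrLE (⊥ : Ideal (MvPolynomial (Fin m) K)) d
       (∑ i, MvPolynomial.C (a i) * tupleOfCoeffs K m d s c i) N) :
    ∃ x : DomIdx m d s N j → K, ∀ k, eval x (Pmap K m d s N j k) = c k := by
  classical
  obtain ⟨g, h, hgdeg, hhdeg, hmem⟩ := hstr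
  have hf : (∑ i, MvPolynomial.C (a i) * tupleOfCoeffs K m d s c i) = ∑ t, g t * h t := by
    have := (Ideal.mem_bot).mp hmem
    exact sub_eq_zero.mp this
  choose α hα1 hα2 hα3 using hgdeg
  choose β hβ1 hβ2 hβ3 using hhdeg
  refine ⟨Sum.elim
    (fun p => Option.elim p.2 (a p.1.1 / a j) (fun μ' => c (p.1.1, μ')))
    (fun p => Sum.elim
       (fun μ1 => if α p.1 + β p.1 = d ∧ α p.1 = (p.2.1 : ℕ) + 1
          then coeff (toF μ1.1) (g p.1) / a j else 0)
       (fun μ2 => if α p.1 + β p.1 = d ∧ α p.1 = (p.2.1 : ℕ) + 1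
          then coeff (toF μ2.1) (h p.1) else 0)
       p.2.2), ?_⟩
  set x : DomIdx m d s N j → K := Sum.elim
    (fun p => Option.elim p.2 (a p.1.1 / a j) (fun μ' => c (p.1.1, μ')))
    (fun p => Sum.elim
       (fun μ1 => if α p.1 + β p.1 = d ∧ α p.1 = (p.2.1 : ℕ) + 1
          then coeff (toF μ1.1) (g p.1) / a j else 0)
       (fun μ2 => if α p.1 + β p.1 = d ∧ α p.1 = (p.2.1 : ℕ) + 1
          then coeff (toF μ2.1) (h p.1) else 0)
       p.2.2) with hxdef
  rintro ⟨i0, μ⟩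
  by_cases hij : i0 = j
  · subst hij
    rw [Pmap]
    rw [dif_pos rfl]
    rw [map_sub]
    simp only [map_sum, map_mul, eval_X, apply_ite (eval x), map_zero]
    simp only [hxdef, Sum.elim_inl, Sum.elim_inr, Option.elim]
    -- now a pure scalar identity
    have hT : ∀ t : Fin N,
        (∑ e : Fin (d-1), ∑ μ1 ∈ (AT m ((e:ℕ)+1)).attach, ∑ μ2 ∈ (AT m (d-1-(e:ℕ))).attach,
          if μ1.1 + μ2.1 = μ.1 then
            (if α t + β t = d ∧ α t = (e : ℕ) + 1 then coeff (toF μ1.1) (g t) / a i0 else 0) *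
            (if α t + β t = d ∧ α t = (e : ℕ) + 1 then coeff (toF μ2.1) (h t) else 0)
          else 0)
        = coeff (toF μ.1) (g t * h t) / a i0 := by
      intro t
      by_cases hgood : α t + β t = d
      · have hα1t := hα1 t
        have hα2t := hα2 t
        set e₀ : Fin (d-1) := ⟨α t - 1, by omega⟩ with he₀
        have hcondpos : α t + β t = d ∧ α t = (e₀ : ℕ) + 1 := ⟨hgood, by
          simp only [he₀]
          omega⟩
        rw [Finset.sum_eq_single e₀]
        · simp only [if_pos hcondpos]
          have he1 : (e₀:ℕ)+1 = α t := by
            simp only [he₀]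
            omega
          have he2 : d-1-(e₀:ℕ) = β t := by
            have hβ1t := hβ1 t
            simp only [he₀]
            omega
          rw [he1, he2]
          rw [coeff_mul_homog (hα3 t) (hβ3 t) μ.1]
          rw [Finset.sum_div]
          apply Finset.sum_congr rfl
          intro μ1 _
          rw [Finset.sum_div]
          apply Finset.sum_congr rfl
          intro μ2 _
          split_ifs with hcc
          · exact div_mul_eq_mul_div _ _ _
          · exact (zero_div _).symm
        · intro e _ hee
          have hcond : ¬ (α t + β t = d ∧ α t = (e : ℕ) + 1) := by
            rintro ⟨h1, h2⟩
            apply hee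
            apply Fin.ext
            simp only [he₀]
            omega
          apply Finset.sum_eq_zero
          intro μ1 _
          apply Finset.sum_eq_zero
          intro μ2 _
          simp only [if_neg hcond, zero_mul, ite_self]
        · intro he
          exact absurd (Finset.mem_univ _) he
      · have hzero : coeff (toF μ.1) (g t * h t) = 0 := by
          apply ((hα3 t).mul (hβ3 t)).coeff_eq_zero
          rw [(mem_AT_iff_degree μ.1).mp μ.2]
          exact fun hc => hgood hc.symm
        rw [hzero, zero_div]
        apply Finset.sum_eq_zero
        intro e _
        apply Finset.sum_eq_zero
        intro μ1 _
        apply Finset.sum_eq_zero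
        intro μ2 _
        have hcond : ¬ (α t + β t = d ∧ α t = (e : ℕ) + 1) := fun hc => hgood hc.1
        simp only [if_neg hcond, zero_mul, ite_self]
    rw [Finset.sum_congr rfl (fun t _ => hT t)]
    have hF : ∑ t : Fin N, coeff (toF μ.1) (g t * h t) = ∑ i' : Fin s, a i' * c (i', μ) := by
      rw [← MvPolynomial.coeff_sum, ← hf, MvPolynomial.coeff_sum]
      apply Finset.sum_congr rfl
      intro i' _
      rw [MvPolynomial.coeff_C_mul, coeff_tupleOfCoeffs]
    rw [← Finset.sum_div, hF]
    have hsplit : ∑ i' : Fin s, a i' * c (i', μ)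
        = a i0 * c (i0, μ) + ∑ i' : {i' : Fin s // i' ≠ i0}, a i'.1 * c (i'.1, μ) := by
      rw [← Finset.add_sum_erase _ _ (Finset.mem_univ i0)]
      congr 1
      rw [Finset.sum_subtype (p := fun i' => i' ≠ i0) (Finset.univ.erase i0)
        (fun i' => by simp [Finset.mem_erase]) (fun i' => a i' * c (i', μ))]
    rw [hsplit]
    rw [show (∑ i' : {i' : Fin s // i' ≠ i0}, a i'.1 / a i0 * c (i'.1, μ))
        = (∑ i' : {i' : Fin s // i' ≠ i0}, a i'.1 * c (i'.1, μ)) / a i0 by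
      rw [Finset.sum_div]
      apply Finset.sum_congr rfl
      intro i' _
      exact div_mul_eq_mul_div _ _ _]
    field_simp
    ring
  · rw [Pmap]
    rw [dif_neg hij]
    rw [eval_X]
    rw [hxdef]
    simp

end Stmt11Aux

/-- Over an algebraically closed field `K`, for `d ≥ 2`, `s ≥ 1`,
`m ≥ d`, there is a dense open subset (the complement of the zero locus of some nonzero
polynomial `g` in the coefficients) of the space of `s`-tuples of degree-`d` forms in `m`
variables on which the collective strength exceeds `(m - s)/(d·2^d)`. -/
theorem stmt_11 (K : Type) [Field K] [IsAlgClosed K] (d s m : ℕ)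
    (hd : 2 ≤ d) (hs : 1 ≤ s) (hm : d ≤ m) :
    ∃ g : MvPolynomial (Fin s × {μ // μ ∈ Finset.Nat.antidiagonalTuple m d}) K,
      g ≠ 0 ∧
      ∀ c : Fin s × {μ // μ ∈ Finset.Nat.antidiagonalTuple m d} → K,
        MvPolynomial.eval c g ≠ 0 →
        ∀ a : Fin s → K, a ≠ 0 → ∀ t : ℕ,
          (t : ℝ) ≤ ((m : ℝ) - (s : ℝ)) / ((d : ℝ) * 2 ^ d) →
          ¬ StrLE (⊥ : Ideal (MvPolynomial (Fin m) K)) d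
              (∑ i, MvPolynomial.C (a i) * tupleOfCoeffs K m d s c i) t := by
  classical
  by_cases hsm : s ≤ m
  · -- main case
    set N := (m-s)/(d*2^d) with hN
    have hq : ∀ j : Fin s, ∃ q : MvPolynomial (Fin s × {μ // μ ∈ Finset.Nat.antidiagonalTuple m d}) K,
        q ≠ 0 ∧ MvPolynomial.aeval (Pmap K m d s N j) q = 0 := by
      intro j
      exact exists_annihilator (card_DomIdx_lt m d s hd hs hm hsm j) _
    choose q hq0 hqa using hq
    refine ⟨∏ j, q j, ?_, ?_⟩
    · exact Finset.prod_ne_zero_iff.mpr (fun j _ => hq0 j)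
    · intro c hc a ha t ht hstr
      obtain ⟨j, hj⟩ := Function.ne_iff.mp ha
      have hj : a j ≠ 0 := by simpa using hj
      have htN : t ≤ N := by
        have hpos : (0:ℝ) < (d:ℝ) * 2^d := by positivity
        have h1 : (t:ℝ) * ((d:ℝ) * 2^d) ≤ (m:ℝ) - (s:ℝ) := (le_div_iff₀ hpos).mp ht
        have h2 : ((t * (d * 2^d) : ℕ) : ℝ) ≤ (((m - s : ℕ)) : ℝ) := by
          rw [Nat.cast_sub hsm]
          push_cast
          convert h1 using 2
        have h3 : t * (d * 2^d) ≤ m - s := Nat.cast_le.mp h2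
        rw [hN]
        exact (Nat.le_div_iff_mul_le (by positivity)).mpr h3
      have hstrN := StrLE.of_le hd hstr htN
      obtain ⟨x, hx⟩ := key_surj m d s N hd j c a hj hstrN
      have h0 : MvPolynomial.eval c (q j) = 0 := by
        have h1 : MvPolynomial.eval x (MvPolynomial.aeval (Pmap K m d s N j) (q j)) = 0 := by
          rw [hqa j]; simp
        rw [eval_aeval'] at h1
        have hxc : (fun k => MvPolynomial.eval x (Pmap K m d s N j k)) = c := funext hx
        rwa [hxc] at h1
      apply hc
      rw [map_prod]
      exact Finset.prod_eq_zero (Finset.mem_univ j) h0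
  · -- trivial case : m < s, the degree bound is negative
    refine ⟨1, one_ne_zero, ?_⟩
    intro c _ a _ t ht
    exfalso
    have hpos : (0:ℝ) < (d:ℝ) * 2^d := by positivity
    have hneg : ((m:ℝ) - (s:ℝ)) / ((d:ℝ) * 2^d) < 0 := by
      apply div_neg_of_neg_of_pos _ hpos
      have : (m:ℝ) < (s:ℝ) := by exact_mod_cast Nat.lt_of_not_le hsm
      linarith
    have : (0:ℝ) ≤ (t:ℝ) := Nat.cast_nonneg t
    linarith
end

section
/- Let K be a field with algebraic closure K̄ and let f_1,...,f_s ∈ K[x_1,...,x_n] be forms which form a regular sequence in K[x_1,...,x_n]. Then the polynomial map (f_1,...,f_s) : K̄^n → K̄^s is surjective. -/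
open MvPolynomial

namespace Stmt13

open Finset

variable {R : Type*} [CommRing R]

/-- ideal generated by `f 0, ..., f (k-1)` -/
def spanLT (f : ℕ → R) (k : ℕ) : Ideal R := Ideal.span {p | ∃ j < k, p = f j}

lemma mem_spanLT_iff {f : ℕ → R} {k : ℕ} {x : R} :
    x ∈ spanLT f k ↔ ∃ u : ℕ → R, x = ∑ j ∈ range k, u j * f j := by
  constructor
  · intro hx
    have : spanLT f k = Ideal.span (Set.range (fun j : Fin k => f j)) := by
      unfold spanLT; congr 1; ext p
      constructor
      · rintro ⟨j, hj, rfl⟩; exact ⟨⟨j, hj⟩, rfl⟩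
      · rintro ⟨⟨j, hj⟩, rfl⟩; exact ⟨j, hj, rfl⟩
    rw [this, Ideal.mem_span_range_iff_exists_fun] at hx
    obtain ⟨c, hc⟩ := hx
    refine ⟨fun j => if h : j < k then c ⟨j, h⟩ else 0, ?_⟩
    rw [← hc, Finset.sum_range (fun j => (if h : j < k then c ⟨j, h⟩ else 0) * f j)]
    exact Finset.sum_congr rfl fun j _ => by simp [j.isLt]
  · rintro ⟨u, rfl⟩
    exact Ideal.sum_mem _ fun j hj =>
      Ideal.mul_mem_left _ _ (Ideal.subset_span ⟨j, Finset.mem_range.mp hj, rfl⟩)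

lemma spanLT_mono (f : ℕ → R) {k l : ℕ} (h : k ≤ l) : spanLT f k ≤ spanLT f l :=
  Ideal.span_mono fun p => by rintro ⟨j, hj, rfl⟩; exact ⟨j, hj.trans_le h, rfl⟩

theorem koszul (f : ℕ → R) (s : ℕ)
    (hreg : ∀ i < s, ∀ g : R, g * f i ∈ spanLT f i → g ∈ spanLT f i) :
    ∀ G : ℕ → R, ∑ i ∈ range s, G i * f i = 0 →
    ∃ c : ℕ → ℕ → R, (∀ i j, c i j = - c j i) ∧ (∀ i, c i i = 0) ∧
      ∀ i < s, G i = ∑ j ∈ range s, c i j * f j := by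
  induction s with
  | zero => exact fun G _ => ⟨0, by simp, by simp, by omega⟩
  | succ s ih =>
    intro G hG
    rw [Finset.sum_range_succ] at hG
    have hmem : G s * f s ∈ spanLT f s := by
      have : G s * f s = -∑ i ∈ range s, G i * f i := by linear_combination hG
      rw [this]
      exact neg_mem (Ideal.sum_mem _ fun j hj =>
        Ideal.mul_mem_left _ _ (Ideal.subset_span ⟨j, Finset.mem_range.mp hj, rfl⟩))
    obtain ⟨u, hu⟩ := mem_spanLT_iff.mp (hreg s (Nat.lt_succ_self s) _ hmem)
    have hrel : ∑ i ∈ range s, (G i + u i * f s) * f i = 0 := by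
      have : ∑ i ∈ range s, (G i + u i * f s) * f i
          = (∑ i ∈ range s, G i * f i) + (∑ i ∈ range s, u i * f i) * f s := by
        rw [Finset.sum_mul]; rw [← Finset.sum_add_distrib]
        exact Finset.sum_congr rfl fun i _ => by ring
      rw [this, ← hu]; linear_combination hG
    obtain ⟨d, hdanti, hddiag, hd⟩ := ih (fun i hi => hreg i (hi.trans (Nat.lt_succ_self s)))
      (fun i => G i + u i * f s) hrel
    set c : ℕ → ℕ → R := fun i j =>
      if i < s ∧ j < s then d i j
      else if i < s ∧ j = s then - u i
      else if i = s ∧ j < s then u j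
      else 0 with hc
    have hcds : ∀ i j, i < s → j < s → c i j = d i j := by
      intro i j hi hj; simp only [hc]; rw [if_pos ⟨hi, hj⟩]
    refine ⟨c, ?_, ?_, ?_⟩
    · intro i j
      simp only [hc]
      split_ifs with h1 h2 h3 h4 h5 h6 h7 h8 h9 <;>
        first
          | (exact hdanti i j)
          | omega
          | simp
          | (subst_vars; omega)
    · intro i
      simp only [hc]
      split_ifs with h1 h2 h3 <;> first | (exact hddiag i) | rfl | omega
    · intro i hi
      rw [Finset.sum_range_succ]
      rcases Nat.lt_succ_iff_lt_or_eq.mp hi with hi | hi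
      · have h1 : ∑ j ∈ range s, c i j * f j = ∑ j ∈ range s, d i j * f j :=
          Finset.sum_congr rfl fun j hj => by rw [hcds i j hi (Finset.mem_range.mp hj)]
        have h2 : c i s = - u i := by
          simp [hc, hi, lt_self_iff_false]
        rw [h1, h2]
        linear_combination (hd i hi)
      · have h1 : ∑ j ∈ range s, c i j * f j = ∑ j ∈ range s, u j * f j := by
          refine Finset.sum_congr rfl fun j hj => ?_
          have hj' := Finset.mem_range.mp hj
          have : c i j = u j := by
            simp [hc, hi, hj', lt_self_iff_false]
          rw [this]
        have h2 : c i s = 0 := by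
          simp [hc, hi, lt_self_iff_false]
        rw [h1, h2, hi, hu]; ring






variable {K : Type*} [Field K] {L : Type*} [CommRing L] [Algebra K L] {σ : Type*}

/-- Apply a `K`-linear functional to all coefficients. -/
noncomputable def phiL (ℓ : L →ₗ[K] K) : MvPolynomial σ L →+ MvPolynomial σ K :=
  AddMonoidAlgebra.coeffAddEquiv.symm.toAddMonoidHom.comp
    ((Finsupp.mapRange.addMonoidHom ℓ.toAddMonoidHom).comp
      AddMonoidAlgebra.coeffAddEquiv.toAddMonoidHom)

lemma coeff_phiL (ℓ : L →ₗ[K] K) (p : MvPolynomial σ L) (m : σ →₀ ℕ) :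
    coeff m (phiL ℓ p) = ℓ (coeff m p) :=
  rfl

lemma phiL_mul_map [DecidableEq σ] (ℓ : L →ₗ[K] K) (p : MvPolynomial σ L) (q : MvPolynomial σ K) :
    phiL ℓ (p * map (algebraMap K L) q) = phiL ℓ p * q := by
  ext m
  rw [coeff_phiL, coeff_mul, coeff_mul, map_sum]
  refine Finset.sum_congr rfl fun uv _ => ?_
  rw [coeff_map, coeff_phiL]
  have : coeff uv.1 p * algebraMap K L (coeff uv.2 q) = coeff uv.2 q • coeff uv.1 p := by
    rw [Algebra.smul_def, mul_comm]
  rw [this, map_smul, smul_eq_mul, mul_comm]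





variable {K : Type*} [Field K] {L : Type*} [CommRing L] [Algebra K L] {σ : Type*}

lemma recon {ι : Type*} (b : Module.Basis ι K L) (p : MvPolynomial σ L) (T : Finset ι)
    (hT : ∀ m : σ →₀ ℕ, (b.repr (coeff m p)).support ⊆ T) :
    ∑ lam ∈ T, (b lam) • map (algebraMap K L) (phiL (b.coord lam) p) = p := by
  ext m
  rw [coeff_sum]
  have h1 : ∀ lam ∈ T, coeff m ((b lam) • map (algebraMap K L) (phiL (b.coord lam) p))
      = (b.repr (coeff m p) lam) • b lam := by
    intro lam _
    rw [coeff_smul, coeff_map, coeff_phiL, Module.Basis.coord_apply, smul_eq_mul,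
      Algebra.smul_def, mul_comm]
  rw [Finset.sum_congr rfl h1]
  rw [← Finset.sum_subset (hT m) (fun lam _ hnot => by
    rw [Finsupp.notMem_support_iff.mp hnot, zero_smul])]
  conv_rhs => rw [← Module.Basis.linearCombination_repr b (coeff m p)]
  rw [Finsupp.linearCombination_apply, Finsupp.sum]

theorem koszul_transfer [DecidableEq σ] (f : ℕ → MvPolynomial σ K) (s : ℕ)
    (hK : ∀ G : ℕ → MvPolynomial σ K, ∑ i ∈ range s, G i * f i = 0 →
      ∃ c : ℕ → ℕ → MvPolynomial σ K, (∀ i j, c i j = - c j i) ∧ (∀ i, c i i = 0) ∧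
        ∀ i < s, G i = ∑ j ∈ range s, c i j * f j) :
    ∀ G : ℕ → MvPolynomial σ L, ∑ i ∈ range s, G i * map (algebraMap K L) (f i) = 0 →
      ∃ c : ℕ → ℕ → MvPolynomial σ L, (∀ i j, c i j = - c j i) ∧ (∀ i, c i i = 0) ∧
        ∀ i < s, G i = ∑ j ∈ range s, c i j * map (algebraMap K L) (f j) := by
  classical
  intro G hG
  set b := Module.Basis.ofVectorSpace K L with hb
  set Gl : Module.Basis.ofVectorSpaceIndex K L → ℕ → MvPolynomial σ K :=
    fun lam i => phiL (b.coord lam) (G i) with hGl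
  have hrel : ∀ lam, ∑ i ∈ range s, Gl lam i * f i = 0 := by
    intro lam
    have : ∀ i ∈ range s, Gl lam i * f i = phiL (b.coord lam) (G i * map (algebraMap K L) (f i)) :=
      fun i _ => (phiL_mul_map _ _ _).symm
    rw [Finset.sum_congr rfl this, ← map_sum, hG, map_zero]
  have hchoice : ∀ lam : Module.Basis.ofVectorSpaceIndex K L, ∃ c : ℕ → ℕ → MvPolynomial σ K,
      ((∀ i j, c i j = - c j i) ∧ (∀ i, c i i = 0) ∧
        ∀ i < s, Gl lam i = ∑ j ∈ range s, c i j * f j)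
      ∧ ((∀ i < s, Gl lam i = 0) → c = 0) := by
    intro lam
    by_cases h0 : ∀ i < s, Gl lam i = 0
    · exact ⟨0, ⟨by simp, by simp, fun i hi => by simp [h0 i hi]⟩, fun _ => rfl⟩
    · obtain ⟨c, h1, h2, h3⟩ := hK (Gl lam) (hrel lam)
      exact ⟨c, ⟨h1, h2, h3⟩, fun h => absurd h h0⟩
  choose cc hcc hcc0 using hchoice
  set T : Finset (Module.Basis.ofVectorSpaceIndex K L) :=
    (range s).biUnion (fun i => (G i).support.biUnion
      (fun m => (b.repr (coeff m (G i))).support)) with hT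
  refine ⟨fun i j => ∑ lam ∈ T, b lam • map (algebraMap K L) (cc lam i j), ?_, ?_, ?_⟩
  · intro i j
    rw [← Finset.sum_neg_distrib]
    refine Finset.sum_congr rfl fun lam _ => ?_
    rw [(hcc lam).1 i j, map_neg, smul_neg]
  · intro i
    refine Finset.sum_eq_zero fun lam _ => ?_
    rw [(hcc lam).2.1 i, map_zero, smul_zero]
  · intro i hi
    have hTsub : ∀ m : σ →₀ ℕ, (b.repr (coeff m (G i))).support ⊆ T := by
      intro m lam hlam
      by_cases hm : coeff m (G i) = 0
      · rw [hm] at hlam; simp at hlam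
      · exact Finset.mem_biUnion.mpr ⟨i, Finset.mem_range.mpr hi,
          Finset.mem_biUnion.mpr ⟨m, mem_support_iff.mpr hm, hlam⟩⟩
    have hrecon := recon b (G i) T hTsub
    calc G i = ∑ lam ∈ T, (b lam) • map (algebraMap K L) (phiL (b.coord lam) (G i)) :=
          hrecon.symm
      _ = ∑ lam ∈ T, ∑ j ∈ range s, b lam • (map (algebraMap K L) (cc lam i j)
            * map (algebraMap K L) (f j)) := by
          refine Finset.sum_congr rfl fun lam _ => ?_
          rw [show phiL (b.coord lam) (G i) = Gl lam i from rfl, (hcc lam).2.2 i hi]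
          rw [map_sum, Finset.smul_sum]
          exact Finset.sum_congr rfl fun j _ => by rw [map_mul]
      _ = ∑ j ∈ range s, (∑ lam ∈ T, b lam • map (algebraMap K L) (cc lam i j))
            * map (algebraMap K L) (f j) := by
          rw [Finset.sum_comm]
          refine Finset.sum_congr rfl fun j _ => ?_
          rw [Finset.sum_mul]
          exact Finset.sum_congr rfl fun lam _ => (smul_mul_assoc _ _ _).symm




variable {R : Type*} [CommRing R] {σ : Type*}

lemma totalDegree_sup (p : MvPolynomial σ R) :
    p.totalDegree = p.support.sup Finsupp.degree := by
  unfold MvPolynomial.totalDegree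
  refine Finset.sup_congr rfl fun m _ => ?_
  rfl

/-- homogeneous component of a product with a form. -/
lemma hc_mul_form (p q : MvPolynomial σ R) (dq N : ℕ) (hq : q.IsHomogeneous dq) :
    homogeneousComponent N (p * q)
      = if dq ≤ N then homogeneousComponent (N - dq) p * q else 0 := by
  conv_lhs => rw [← sum_homogeneousComponent p, Finset.sum_mul, map_sum]
  have h1 : ∀ k ∈ range (p.totalDegree + 1),
      homogeneousComponent N (homogeneousComponent k p * q)
        = if N = k + dq then homogeneousComponent k p * q else 0 := by
    intro k _
    exact homogeneousComponent_of_mem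
      ((mem_homogeneousSubmodule _ _).mpr
        ((homogeneousComponent_isHomogeneous k p).mul hq))
  rw [Finset.sum_congr rfl h1]
  by_cases hdq : dq ≤ N
  · rw [if_pos hdq]
    have h2 : ∀ k ∈ range (p.totalDegree + 1),
        (if N = k + dq then homogeneousComponent k p * q else 0)
          = if k = N - dq then homogeneousComponent k p * q else 0 := by
      intro k _
      congr 1
      simp only [eq_iff_iff]
      omega
    rw [Finset.sum_congr rfl h2, Finset.sum_ite_eq' (range (p.totalDegree + 1)) (N - dq)]
    split_ifs with h3
    · rfl
    · rw [homogeneousComponent_eq_zero, zero_mul]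
      simp only [Finset.mem_range, not_lt] at h3
      omega
  · rw [if_neg hdq]
    refine Finset.sum_eq_zero fun k _ => ?_
    rw [if_neg (by omega)]



lemma strip_top (p : MvPolynomial σ R) (M : ℕ) (hp : p.totalDegree ≤ M) :
    p - homogeneousComponent M p = 0 ∨
      (p - homogeneousComponent M p).totalDegree + 1 ≤ M := by
  by_cases h0 : p - homogeneousComponent M p = 0
  · exact Or.inl h0
  right
  have hdeg : ∀ m ∈ (p - homogeneousComponent M p).support, m.degree + 1 ≤ M := by
    intro m hm
    rw [mem_support_iff] at hm
    have hcm : coeff m (p - homogeneousComponent M p)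
        = coeff m p - (if m.degree = M then coeff m p else 0) := by
      rw [coeff_sub, coeff_homogeneousComponent]
    by_cases hdeg : m.degree = M
    · rw [hcm, if_pos hdeg, sub_self] at hm; exact absurd rfl hm
    · have hle : m.degree ≤ p.totalDegree := by
        refine Finset.le_sup (f := Finsupp.degree) ?_ |>.trans_eq (totalDegree_sup p).symm
        rw [mem_support_iff]
        intro hc
        rw [hcm, hc, if_neg hdeg, sub_zero] at hm
        exact hm rfl
      omega
  obtain ⟨m, hm⟩ := (support_nonempty.mpr h0)
  have h1 : (p - homogeneousComponent M p).totalDegree ≤ M - 1 := by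
    rw [totalDegree_sup]
    exact Finset.sup_le fun m' hm' => by have := hdeg m' hm'; omega
  have := hdeg m hm
  omega



lemma sum_pair_antisym {M : Type*} [AddCommGroup M] (s : ℕ) (F : ℕ → ℕ → M)
    (hanti : ∀ i j, F i j = - F j i) (hdiag : ∀ i, F i i = 0) :
    ∑ x ∈ range s ×ˢ range s, F x.1 x.2 = 0 := by
  refine Finset.sum_involution (fun x _ => (x.2, x.1)) ?_ ?_ ?_ ?_
  · intro x _
    rw [hanti x.1 x.2]; simp
  · intro x _ hne heq
    apply hne
    have h1 : x.2 = x.1 := congrArg Prod.fst heq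
    rw [h1, hdiag]
  · intro x hx
    rw [Finset.mem_product] at hx ⊢
    exact ⟨hx.2, hx.1⟩
  · intro x _
    rfl



theorem descent {L : Type*} [CommRing L] [Nontrivial L]
    (f : ℕ → MvPolynomial σ L) (d : ℕ → ℕ) (s : ℕ)
    (hhom : ∀ i < s, (f i).IsHomogeneous (d i))
    (hd : ∀ i < s, 1 ≤ d i)
    (hKos : ∀ G : ℕ → MvPolynomial σ L, ∑ i ∈ range s, G i * f i = 0 →
      ∃ c : ℕ → ℕ → MvPolynomial σ L, (∀ i j, c i j = - c j i) ∧ (∀ i, c i i = 0) ∧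
        ∀ i < s, G i = ∑ j ∈ range s, c i j * f j)
    (a : ℕ → L) :
    ∀ N, ∀ g : ℕ → MvPolynomial σ L,
      (∀ i < s, g i = 0 ∨ (g i).totalDegree + d i ≤ N) →
      ∑ i ∈ range s, g i * (f i - C (a i)) ≠ 1 := by
  intro N
  induction N using Nat.strong_induction_on with
  | _ N IH =>
  intro g hgb hsum
  by_cases hall : ∀ i < s, g i = 0
  · rw [Finset.sum_eq_zero (fun i hi => by
      rw [hall i (Finset.mem_range.mp hi), zero_mul])] at hsum
    exact zero_ne_one hsum
  push_neg at hall
  obtain ⟨i0, hi0s, hi0⟩ := hall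
  have hN1 : 1 ≤ N := by
    rcases hgb i0 hi0s with h | h
    · exact absurd h hi0
    · have := hd i0 hi0s; omega
  set G : ℕ → MvPolynomial σ L := fun i => homogeneousComponent (N - d i) (g i) with hG
  -- top-degree part of the relation
  have hGtop : ∀ i < s, homogeneousComponent N (g i * (f i - C (a i))) = G i * f i := by
    intro i hi
    by_cases h0 : g i = 0
    · have hGi : G i = 0 := by
        rw [show G i = homogeneousComponent (N - d i) (g i) from rfl, h0, map_zero]
      rw [h0, zero_mul, map_zero, hGi, zero_mul]
    have hbound := (hgb i hi).resolve_left h0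
    have hdiN : d i ≤ N := le_trans (Nat.le_add_left _ _) hbound
    have h2 : g i * C (a i) = a i • g i := by
      rw [smul_eq_C_mul, mul_comm]
    have h3 : homogeneousComponent N (g i) = 0 :=
      homogeneousComponent_eq_zero N (g i) (by have := hd i hi; omega)
    rw [mul_sub, map_sub, hc_mul_form (g i) (f i) (d i) N (hhom i hi), if_pos hdiN,
      h2, map_smul, h3, smul_zero, sub_zero]
  have hrel : ∑ i ∈ range s, G i * f i = 0 := by
    calc ∑ i ∈ range s, G i * f i
        = ∑ i ∈ range s, homogeneousComponent N (g i * (f i - C (a i))) :=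
          Finset.sum_congr rfl fun i hi => (hGtop i (Finset.mem_range.mp hi)).symm
      _ = homogeneousComponent N (∑ i ∈ range s, g i * (f i - C (a i))) := (map_sum _ _ _).symm
      _ = homogeneousComponent N 1 := by rw [hsum]
      _ = 0 := by
          apply homogeneousComponent_eq_zero
          rw [totalDegree_one]
          omega
  obtain ⟨c, hcanti, hcdiag, hcrep⟩ := hKos G hrel
  set c' : ℕ → ℕ → MvPolynomial σ L := fun i j =>
    if d i + d j ≤ N then homogeneousComponent (N - d i - d j) (c i j) else 0 with hc'
  have hc'anti : ∀ i j, c' i j = - c' j i := by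
    intro i j
    simp only [hc']
    by_cases h : d i + d j ≤ N
    · have heq : N - d i - d j = N - d j - d i := by omega
      rw [if_pos h, if_pos (by omega), hcanti i j, map_neg, heq]
    · rw [if_neg h, if_neg (by omega), neg_zero]
  have hc'diag : ∀ i, c' i i = 0 := by
    intro i
    simp only [hc']
    split_ifs with h
    · rw [hcdiag i, map_zero]
    · rfl
  have hc'rep : ∀ i < s, G i = ∑ j ∈ range s, c' i j * f j := by
    intro i hi
    have hGhom : (G i).IsHomogeneous (N - d i) := homogeneousComponent_isHomogeneous _ _
    have e := congrArg (homogeneousComponent (N - d i)) (hcrep i hi)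
    rw [homogeneousComponent_of_mem ((mem_homogeneousSubmodule _ _).mpr hGhom), if_pos rfl,
      map_sum] at e
    rw [e]
    refine Finset.sum_congr rfl fun j hj => ?_
    have hdj := hd j (Finset.mem_range.mp hj)
    rw [hc_mul_form (c i j) (f j) (d j) (N - d i) (hhom j (Finset.mem_range.mp hj))]
    simp only [hc']
    by_cases h : d j ≤ N - d i
    · have heq : N - d i - d j = N - d i - d j := rfl
      rw [if_pos h, if_pos (show d i + d j ≤ N by omega)]
    · rw [if_neg h, if_neg (show ¬ (d i + d j ≤ N) by omega), zero_mul]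
  -- the corrected coefficients
  set H : ℕ → MvPolynomial σ L := fun i => ∑ j ∈ range s, c' i j * C (a j) with hH
  set g' : ℕ → MvPolynomial σ L := fun i => (g i - G i) + H i with hg'
  -- the new relation
  have hsum' : ∑ i ∈ range s, g' i * (f i - C (a i)) = 1 := by
    have E1 : ∑ i ∈ range s, g' i * (f i - C (a i))
        = ∑ i ∈ range s, (g i * (f i - C (a i)) - G i * f i + G i * C (a i)
            + (H i * f i - H i * C (a i))) :=
      Finset.sum_congr rfl fun i _ => by simp only [hg']; ring
    have E3 : ∑ i ∈ range s, G i * C (a i)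
        = ∑ i ∈ range s, ∑ j ∈ range s, c' i j * f j * C (a i) := by
      refine Finset.sum_congr rfl fun i hi => ?_
      rw [hc'rep i (Finset.mem_range.mp hi), Finset.sum_mul]
    have E4 : ∑ i ∈ range s, H i * f i
        = ∑ i ∈ range s, ∑ j ∈ range s, c' i j * C (a j) * f i := by
      refine Finset.sum_congr rfl fun i _ => ?_
      simp only [hH]
      rw [Finset.sum_mul]
    have E5 : ∑ i ∈ range s, H i * C (a i)
        = ∑ i ∈ range s, ∑ j ∈ range s, c' i j * C (a j) * C (a i) := by
      refine Finset.sum_congr rfl fun i _ => ?_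
      simp only [hH]
      rw [Finset.sum_mul]
    have SS1 : (∑ i ∈ range s, ∑ j ∈ range s, c' i j * f j * C (a i))
        + (∑ i ∈ range s, ∑ j ∈ range s, c' i j * C (a j) * f i) = 0 := by
      rw [← Finset.sum_product' (f := fun i j => c' i j * f j * C (a i)),
        ← Finset.sum_product' (f := fun i j => c' i j * C (a j) * f i),
        ← Finset.sum_add_distrib]
      have pf1 : ∀ i j, c' i j * f j * C (a i) + c' i j * C (a j) * f i
          = -(c' j i * f i * C (a j) + c' j i * C (a i) * f j) := by
        intro i j; rw [hc'anti i j]; ring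
      have pf2 : ∀ i, c' i i * f i * C (a i) + c' i i * C (a i) * f i = 0 := by
        intro i; rw [hc'diag i]; ring
      exact sum_pair_antisym s (fun i j => c' i j * f j * C (a i) + c' i j * C (a j) * f i)
        pf1 pf2
    have SS2 : ∑ i ∈ range s, ∑ j ∈ range s, c' i j * C (a j) * C (a i) = 0 := by
      rw [← Finset.sum_product' (f := fun i j => c' i j * C (a j) * C (a i))]
      have pf1 : ∀ i j, c' i j * C (a j) * C (a i) = -(c' j i * C (a i) * C (a j)) := by
        intro i j; rw [hc'anti i j]; ring
      have pf2 : ∀ i, c' i i * C (a i) * C (a i) = 0 := by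
        intro i; rw [hc'diag i]; ring
      exact sum_pair_antisym s (fun i j => c' i j * C (a j) * C (a i)) pf1 pf2
    rw [E1]
    rw [Finset.sum_add_distrib, Finset.sum_add_distrib, Finset.sum_sub_distrib,
      Finset.sum_sub_distrib, hsum, hrel, E3, E4, E5]
    linear_combination SS1 - SS2
  -- the degree bound for the new coefficients
  have hgb' : ∀ i < s, g' i = 0 ∨ (g' i).totalDegree + d i ≤ N - 1 := by
    intro i hi
    have hgiG : (g i).totalDegree ≤ N - d i := by
      rcases hgb i hi with h | h
      · rw [h, totalDegree_zero]; exact Nat.zero_le _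
      · omega
    by_cases hdiN : d i + 1 ≤ N
    · right
      have hu : (g i - G i).totalDegree ≤ N - d i - 1 := by
        rcases strip_top (g i) (N - d i) hgiG with h | h
        · have h' : g i - G i = 0 := h
          rw [h', totalDegree_zero]; exact Nat.zero_le _
        · have h' : (g i - G i).totalDegree + 1 ≤ N - d i := h
          omega
      have hv : (H i).totalDegree ≤ N - d i - 1 := by
        simp only [hH]
        refine le_trans (totalDegree_finset_sum _ _) (Finset.sup_le fun j hj => ?_)
        have hdj := hd j (Finset.mem_range.mp hj)
        simp only [hc']
        split_ifs with h
        · refine le_trans (totalDegree_mul _ _) ?_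
          rw [totalDegree_C, Nat.add_zero]
          refine le_trans ((homogeneousComponent_isHomogeneous _ _).totalDegree_le) ?_
          omega
        · rw [zero_mul, totalDegree_zero]; exact Nat.zero_le _
      have : (g' i).totalDegree ≤ N - d i - 1 := by
        simp only [hg']
        exact le_trans (totalDegree_add _ _) (max_le hu hv)
      omega
    · left
      have hvz : H i = 0 := by
        simp only [hH]
        refine Finset.sum_eq_zero fun j hj => ?_
        have hdj := hd j (Finset.mem_range.mp hj)
        simp only [hc']
        rw [if_neg (by omega), zero_mul]
      have huz : g i - G i = 0 := by
        rcases strip_top (g i) (N - d i) hgiG with h | h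
        · exact h
        · exfalso; omega
      simp only [hg']
      rw [huz, hvz, add_zero]
  exact IH (N - 1) (by omega) g' hgb' hsum'



lemma weak_nss {k : Type*} [Field k] [IsAlgClosed k] {m : Type*} [Fintype m]
    (I : Ideal (MvPolynomial m k)) (hI : I ≠ ⊤) :
    ∃ x : m → k, ∀ p ∈ I, eval x p = 0 := by
  by_contra hx
  push_neg at hx
  have hempty : MvPolynomial.zeroLocus k I = ∅ := by
    ext x
    simp only [Set.mem_empty_iff_false, iff_false]
    intro hmem
    obtain ⟨p, hp, hne⟩ := hx x
    exact hne (by simpa [MvPolynomial.coe_aeval_eq_eval] using hmem p hp)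
  have h1 : MvPolynomial.vanishingIdeal k (MvPolynomial.zeroLocus k I) = ⊤ := by
    rw [hempty, MvPolynomial.vanishingIdeal_empty]
  rw [MvPolynomial.vanishingIdeal_zeroLocus_eq_radical] at h1
  exact hI (Ideal.radical_eq_top.mp h1)



-- new material starts here

lemma ofList_eq_span (l : List R) : Ideal.ofList l = Ideal.span {x | x ∈ l} := by
  induction l with
  | nil =>
    rw [Ideal.ofList_nil]
    have : {x : R | x ∈ ([] : List R)} = ∅ := by ext x; simp
    rw [this, Ideal.span_empty]
  | cons r t ih =>
    rw [Ideal.ofList_cons, ih, ← Ideal.span_union]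
    congr 1
    ext x
    simp [List.mem_cons]

lemma span_smul_top (S : Set R) : (Ideal.span S • ⊤ : Submodule R R) = Ideal.span S := by
  rw [Submodule.span_smul_eq, Submodule.set_smul_top_eq_span]

lemma spanLT_smul_top (f : ℕ → R) (k : ℕ) :
    (spanLT f k • ⊤ : Submodule R R) = spanLT f k := span_smul_top _

lemma eq_C_of_td_zero (p : MvPolynomial σ R) (h : p.totalDegree = 0) :
    p = C (coeff 0 p) := by
  classical
  ext m
  rw [coeff_C]
  by_cases hm : (0 : σ →₀ ℕ) = m
  · rw [if_pos hm, ← hm]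
  · rw [if_neg hm]
    by_contra hc
    have hmem := mem_support_iff.mpr hc
    rw [totalDegree_eq_zero_iff] at h
    apply hm
    exact (Finsupp.ext fun x => by simpa using h m hmem x).symm

end Stmt13

open Stmt13 Finset RingTheory.Sequence in
/-- If forms `f 1, ..., f s ∈ K[x_1,...,x_n]` form a regular sequence,
then the induced polynomial map `K̄ⁿ → K̄ˢ` is surjective. -/
theorem stmt_13 (K : Type) [Field K] (n s : ℕ)
    (f : Fin s → MvPolynomial (Fin n) K) (df : Fin s → ℕ)
    (hf : ∀ i, (f i).IsHomogeneous (df i))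
    (hreg : RingTheory.Sequence.IsRegular (MvPolynomial (Fin n) K) (List.ofFn f)) :
    ∀ a : Fin s → AlgebraicClosure K, ∃ x : Fin n → AlgebraicClosure K,
      ∀ i, MvPolynomial.eval x
        (MvPolynomial.map (algebraMap K (AlgebraicClosure K)) (f i)) = a i := by
  intro a
  classical
  set F : ℕ → MvPolynomial (Fin n) K := fun i => if h : i < s then f ⟨i, h⟩ else 0 with hF
  set D : ℕ → ℕ := fun i => if h : i < s then df ⟨i, h⟩ else 1 with hD
  set A : ℕ → AlgebraicClosure K := fun i => if h : i < s then a ⟨i, h⟩ else 0 with hA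
  have hlen : (List.ofFn f).length = s := List.length_ofFn
  have hget : ∀ (i : ℕ) (hi : i < s),
      (List.ofFn f)[i]'(by rw [hlen]; exact hi) = F i := by
    intro i hi
    rw [List.getElem_ofFn]
    simp only [hF]
    rw [dif_pos hi]
  have hpre : ∀ i ≤ s, Ideal.ofList ((List.ofFn f).take i) = spanLT F i := by
    intro i his
    rw [ofList_eq_span]
    unfold spanLT
    congr 1
    ext x
    simp only [Set.mem_setOf_eq]
    rw [List.mem_take_iff_getElem]
    constructor
    · rintro ⟨j, hj, rfl⟩
      have hjs : j < s := by rw [hlen] at hj; omega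
      have hji : j < i := by omega
      exact ⟨j, hji, hget j hjs⟩
    · rintro ⟨j, hji, rfl⟩
      have hjs : j < s := lt_of_lt_of_le hji his
      exact ⟨j, (by rw [hlen]; omega), hget j hjs⟩
  have hofl : Ideal.ofList (List.ofFn f) = spanLT F s := by
    have := hpre s le_rfl
    rwa [List.take_of_length_le (le_of_eq hlen)] at this
  have hproper : spanLT F s ≠ ⊤ := by
    intro hcon
    apply hreg.top_ne_smul
    have h2 : (Ideal.ofList (List.ofFn f) • ⊤ : Submodule (MvPolynomial (Fin n) K) (MvPolynomial (Fin n) K)) = spanLT F s := by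
      rw [hofl]
      exact span_smul_top _
    rw [h2, hcon]
  have hwreg : ∀ i < s, ∀ g : MvPolynomial (Fin n) K, g * F i ∈ spanLT F i → g ∈ spanLT F i := by
    intro i hi g hg
    have hw := hreg.toIsWeaklyRegular.regular_mod_prev i (by rw [hlen]; exact hi)
    rw [hpre i hi.le, hget i hi] at hw
    have hsm : (spanLT F i • ⊤ : Submodule (MvPolynomial (Fin n) K) (MvPolynomial (Fin n) K)) = spanLT F i := span_smul_top _
    have h0 : F i • (Submodule.Quotient.mk g :
        MvPolynomial (Fin n) K ⧸ (spanLT F i • ⊤ : Submodule (MvPolynomial (Fin n) K) (MvPolynomial (Fin n) K))) = F i • (Submodule.Quotient.mk 0) := by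
      rw [← Submodule.Quotient.mk_smul, ← Submodule.Quotient.mk_smul]
      rw [Submodule.Quotient.eq]
      rw [hsm]
      rw [smul_eq_mul, smul_zero, sub_zero, mul_comm]
      exact hg
    have := hw h0
    rw [Submodule.Quotient.eq] at this
    rw [hsm] at this
    simpa using this
  have hFh : ∀ i < s, (F i).IsHomogeneous (D i) := by
    intro i hi
    simp only [hF, hD]
    rw [dif_pos hi, dif_pos hi]
    exact hf _
  have hdpos : ∀ i < s, 1 ≤ D i := by
    intro i hi
    by_contra h0
    have hdi : D i = 0 := by omega
    have hhom0 : (F i).IsHomogeneous 0 := hdi ▸ hFh i hi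
    by_cases hz : F i = 0
    · -- 0 is not weakly regular on a nontrivial quotient
      have hw := hreg.toIsWeaklyRegular.regular_mod_prev i (by rw [hlen]; exact hi)
      rw [hpre i hi.le, hget i hi, hz] at hw
      have hne : (1 : MvPolynomial (Fin n) K) ∉ spanLT F i := by
        intro h1
        exact hproper ((Ideal.eq_top_iff_one _).mpr (spanLT_mono F hi.le h1))
      have h0 : (0 : MvPolynomial (Fin n) K) • (Submodule.Quotient.mk 1 :
          MvPolynomial (Fin n) K ⧸ (spanLT F i • ⊤ : Submodule (MvPolynomial (Fin n) K) (MvPolynomial (Fin n) K))) = (0 : MvPolynomial (Fin n) K) • (Submodule.Quotient.mk 0) := by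
        rw [zero_smul, zero_smul]
      have := hw h0
      rw [Submodule.Quotient.eq, spanLT_smul_top] at this
      simp only [sub_zero] at this
      exact hne this
    · have htd : (F i).totalDegree = 0 :=
        le_antisymm hhom0.totalDegree_le (Nat.zero_le _)
      have hC : F i = C (coeff 0 (F i)) := eq_C_of_td_zero _ htd
      have hc0 : coeff 0 (F i) ≠ 0 := by
        intro h
        apply hz
        rw [hC, h, map_zero]
      have hunit : IsUnit (F i) := by
        rw [hC]
        exact isUnit_iff_exists_inv.mpr ⟨C (coeff 0 (F i))⁻¹, by
          rw [← map_mul, mul_inv_cancel₀ hc0, map_one]⟩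
      exact hproper (Ideal.eq_top_of_isUnit_mem _
        (Ideal.subset_span ⟨i, hi, rfl⟩) hunit)
  -- transfer to the algebraic closure
  have hKosK := koszul F s hwreg
  have hKosL := koszul_transfer (L := AlgebraicClosure K) F s hKosK
  have hhomL : ∀ i < s, ((fun i => map (algebraMap K (AlgebraicClosure K)) (F i)) i).IsHomogeneous (D i) :=
    fun i hi => (hFh i hi).map (algebraMap K (AlgebraicClosure K))
  -- Properness of the ideal of the fiber
  set Gen : ℕ → MvPolynomial (Fin n) (AlgebraicClosure K) := fun j => map (algebraMap K (AlgebraicClosure K)) (F j) - C (A j) with hGen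
  have hproperL : spanLT Gen s ≠ ⊤ := by
    intro hcon
    have h1 : (1 : MvPolynomial (Fin n) (AlgebraicClosure K)) ∈ spanLT Gen s :=
      (Ideal.eq_top_iff_one _).mp hcon
    obtain ⟨u, hu⟩ := mem_spanLT_iff.mp h1
    have hbound : ∀ i < s, u i = 0 ∨
        (u i).totalDegree + D i ≤ ∑ j ∈ range s, ((u j).totalDegree + D j) := by
      intro i hi
      exact Or.inr (Finset.single_le_sum
        (f := fun j => (u j).totalDegree + D j) (fun j _ => Nat.zero_le _)
        (Finset.mem_range.mpr hi))
    exact descent (fun i => map (algebraMap K (AlgebraicClosure K)) (F i)) D s hhomL hdpos hKosL A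
      (∑ j ∈ range s, ((u j).totalDegree + D j)) u hbound hu.symm
  obtain ⟨x, hx⟩ := weak_nss (spanLT Gen s) hproperL
  refine ⟨x, fun i => ?_⟩
  have hmem : Gen i.val ∈ spanLT Gen s := Ideal.subset_span ⟨i.val, i.isLt, rfl⟩
  have h0 := hx _ hmem
  simp only [hGen] at h0
  rw [map_sub, eval_C] at h0
  have hFi : F i.val = f i := by
    simp only [hF]
    rw [dif_pos i.isLt]
  have hAi : A i.val = a i := by
    simp only [hA]
    rw [dif_pos i.isLt]
  rw [hFi, hAi] at h0
  linear_combination h0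
end
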